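/- arXiv:0905.2680 — 4 statements merged into one kernel-verified Lean document; each statement's English description precedes it below -/
import Mathlib

section
/- Let U be an open convex subset of ℝ^k and f a real continuous convex function on U. Then for each x ∈ U and each extreme point a of the subdifferential ∂f(x), there exists a sequence (x_n) ⊂ U such that x_n → x, f is differentiable at each x_n, and the gradients f'(x_n) converge to a. -/
open Filter Topology Set

noncomputable section

variable {k : ℕ}

/-- The subdifferential `∂f(x)` of `f : U → ℝ` at `x`, relative to `U`:
vectors `v` with `⟪v, y - x⟫ ≤ f y - f x` for all `y ∈ U`. -/
def subdiffR (f : EuclideanSpace ℝ (Fin k) → ℝ) (U : Set (EuclideanSpace ℝ (Fin k)))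
    (x : EuclideanSpace ℝ (Fin k)) : Set (EuclideanSpace ℝ (Fin k)) :=
  {v | ∀ y ∈ U, (inner ℝ v (y - x) : ℝ) ≤ f y - f x}

local notation "E" => EuclideanSpace ℝ (Fin k)

lemma inner_gradient_eq (f : E → ℝ) (y v : E) :
    (inner ℝ (gradient f y) v : ℝ) = fderiv ℝ f y v :=
  InnerProductSpace.toDual_symm_apply

lemma fderiv_le_slope {U : Set (EuclideanSpace ℝ (Fin k))} (hUopen : IsOpen U)
    {f : E → ℝ} {y : E} (hy : y ∈ U) (hd : DifferentiableAt ℝ f y) (v : E)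
    (hslope : ∀ᶠ t in 𝓝[>] (0:ℝ), f (y + t • v) - f y ≤ t * ((f (y + v)) - f y)) :
    fderiv ℝ f y v ≤ f (y + v) - f y := by
  set φ : ℝ → ℝ := fun t => f (y + t • v) with hφdef
  have hc : HasDerivAt (fun t : ℝ => y + t • v) v 0 := by
    simpa using ((hasDerivAt_id (0:ℝ)).smul_const v).const_add y
  have hφ : HasDerivAt φ (fderiv ℝ f y v) 0 := by
    have h1 : HasFDerivAt f (fderiv ℝ f y) (y + (0:ℝ) • v) := by
      simpa using hd.hasFDerivAt
    exact h1.comp_hasDerivAt 0 hc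
  have htend : Tendsto (slope φ 0) (𝓝[>] (0:ℝ)) (𝓝 (fderiv ℝ f y v)) :=
    (hasDerivAt_iff_tendsto_slope.1 hφ).mono_left
      (nhdsWithin_mono _ (fun t ht => ne_of_gt ht))
  refine le_of_tendsto htend ?_
  filter_upwards [hslope, self_mem_nhdsWithin] with t ht ht0
  have ht0' : (0:ℝ) < t := ht0
  have hsub : φ t - φ 0 ≤ t * (f (y + v) - f y) := by simpa [hφdef] using ht
  rw [slope_def_field, sub_zero, div_le_iff₀ ht0']
  linarith [hsub]

lemma tendsto_slope_line {f : E → ℝ} {y : E} (hd : DifferentiableAt ℝ f y) (u : E) :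
    Tendsto (fun t : ℝ => (f (y + t • u) - f y) / t) (𝓝[>] (0:ℝ))
      (𝓝 (fderiv ℝ f y u)) := by
  set φ : ℝ → ℝ := fun t => f (y + t • u) with hφdef
  have hc : HasDerivAt (fun t : ℝ => y + t • u) u 0 := by
    simpa using ((hasDerivAt_id (0:ℝ)).smul_const u).const_add y
  have hφ : HasDerivAt φ (fderiv ℝ f y u) 0 := by
    have h1 : HasFDerivAt f (fderiv ℝ f y) (y + (0:ℝ) • u) := by
      simpa using hd.hasFDerivAt
    exact h1.comp_hasDerivAt 0 hc
  have htend : Tendsto (slope φ 0) (𝓝[>] (0:ℝ)) (𝓝 (fderiv ℝ f y u)) :=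
    (hasDerivAt_iff_tendsto_slope.1 hφ).mono_left
      (nhdsWithin_mono _ (fun t ht => ne_of_gt ht))
  refine htend.congr' ?_
  filter_upwards [self_mem_nhdsWithin] with t ht
  rw [slope_def_field, sub_zero]
  simp [hφdef]

lemma gradient_mem_subdiffR {U : Set (EuclideanSpace ℝ (Fin k))} (hUopen : IsOpen U)
    {f : E → ℝ} (hconv : ConvexOn ℝ U f) {y : E} (hy : y ∈ U)
    (hd : DifferentiableAt ℝ f y) : gradient f y ∈ subdiffR f U y := by
  intro z hz
  rw [inner_gradient_eq]
  have htend := tendsto_slope_line hd (z - y)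
  have hle : fderiv ℝ f y (z - y) ≤ f z - f y := by
    refine le_of_tendsto htend ?_
    filter_upwards [Ioo_mem_nhdsGT_of_mem (left_mem_Ico.2 one_pos)] with t ht
    have h1 : (0:ℝ) ≤ 1 - t := by linarith [ht.2]
    have h2 : (0:ℝ) ≤ t := ht.1.le
    have heq : y + t • (z - y) = (1 - t) • y + t • z := by
      rw [smul_sub, sub_smul, one_smul]
      abel
    have hcx := hconv.2 hy hz h1 h2 (by ring)
    rw [← heq, smul_eq_mul, smul_eq_mul] at hcx
    rw [div_le_iff₀ ht.1]
    nlinarith [hcx]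
  exact hle

lemma subdiffR_eq_singleton_of_differentiableAt {U : Set (EuclideanSpace ℝ (Fin k))}
    (hUopen : IsOpen U) {f : E → ℝ} (hconv : ConvexOn ℝ U f) {y : E} (hy : y ∈ U)
    (hd : DifferentiableAt ℝ f y) : subdiffR f U y = {gradient f y} := by
  refine Subset.antisymm ?_ ?_
  · intro v hv
    have key : ∀ u : E, (inner ℝ v u : ℝ) ≤ fderiv ℝ f y u := by
      intro u
      have htend := tendsto_slope_line hd u
      refine ge_of_tendsto htend ?_
      have hU : ∀ᶠ t in 𝓝[>] (0:ℝ), y + t • u ∈ U := by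
        have hcont : Tendsto (fun t : ℝ => y + t • u) (𝓝[>] (0:ℝ)) (𝓝 y) := by
          have h0 : Tendsto (fun t : ℝ => y + t • u) (𝓝 (0:ℝ)) (𝓝 (y + (0:ℝ) • u)) :=
            (tendsto_id.smul_const u).const_add y
          simpa using h0.mono_left nhdsWithin_le_nhds
        exact hcont.eventually (hUopen.mem_nhds hy)
      filter_upwards [hU, self_mem_nhdsWithin] with t htU ht0
      have ht0' : (0:ℝ) < t := ht0
      have := hv _ htU
      rw [add_sub_cancel_left] at this
      rw [le_div_iff₀ ht0']
      calc (inner ℝ v u : ℝ) * t = (inner ℝ v (t • u) : ℝ) := by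
            rw [real_inner_smul_right]; ring
      _ ≤ f (y + t • u) - f y := this
    have h1 := key (gradient f y - v + v)
    apply ext_inner_right ℝ
    intro w
    have hw1 := key w
    have hw2 := key (-w)
    rw [inner_gradient_eq]
    have hneg : fderiv ℝ f y (-w) = -(fderiv ℝ f y w) := (fderiv ℝ f y).map_neg w
    rw [inner_neg_right, hneg] at hw2
    linarith
  · rintro v rfl
    exact gradient_mem_subdiffR hUopen hconv hy hd

lemma tendsto_of_dist_le_div {X : Type*} [PseudoMetricSpace X] {u : ℕ → X} {l : X}
    (C : ℝ) (h : ∀ n : ℕ, dist (u n) l ≤ C / (n + 1)) : Tendsto u atTop (𝓝 l) := by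
  refine tendsto_iff_dist_tendsto_zero.2 (squeeze_zero (fun n => dist_nonneg) h ?_)
  have h2 := tendsto_one_div_add_atTop_nhds_zero_nat.const_mul C
  simpa [mul_one_div, div_eq_mul_inv] using h2

lemma tendsto_of_dist_lt {X : Type*} [PseudoMetricSpace X] {u : ℕ → X} {l : X}
    (h : ∀ n : ℕ, dist (u n) l < 1 / (n + 1)) : Tendsto u atTop (𝓝 l) :=
  tendsto_iff_dist_tendsto_zero.2 (squeeze_zero (fun n => dist_nonneg)
    (fun n => (h n).le) tendsto_one_div_add_atTop_nhds_zero_nat)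

lemma mem_subdiffR_of_tendsto {U : Set (EuclideanSpace ℝ (Fin k))} (hUopen : IsOpen U)
    {f : E → ℝ} (hcont : ContinuousOn f U) {x : E} (hx : x ∈ U)
    {y : ℕ → E} {v : ℕ → E} {w : E} (hyU : ∀ n, y n ∈ U) (hyx : Tendsto y atTop (𝓝 x))
    (hv : ∀ n, v n ∈ subdiffR f U (y n)) (hvw : Tendsto v atTop (𝓝 w)) :
    w ∈ subdiffR f U x := by
  intro z hz
  have hfy : Tendsto (fun n => f (y n)) atTop (𝓝 (f x)) :=
    (hcont.continuousAt (hUopen.mem_nhds hx)).tendsto.comp hyx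
  have h1 : Tendsto (fun n => (inner ℝ (v n) (z - y n) : ℝ)) atTop (𝓝 (inner ℝ w (z - x))) :=
    hvw.inner (tendsto_const_nhds.sub hyx)
  exact le_of_tendsto_of_tendsto' h1 (tendsto_const_nhds.sub hfy) (fun n => hv n _ hz)

lemma isCompact_convexHull_of_isCompact {s : Set E} (hs : IsCompact s) (hne : s.Nonempty) :
    IsCompact (convexHull ℝ s) := by
  classical
  obtain ⟨y₀, hy₀⟩ := hne
  set ι := Fin (k + 1)
  set T : Set ((ι → ℝ) × (ι → E)) :=
    (stdSimplex ℝ ι) ×ˢ (Set.univ.pi fun _ : ι => s) with hT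
  have hTc : IsCompact T := (isCompact_stdSimplex (𝕜 := ℝ) (ι := ι)).prod (isCompact_univ_pi fun _ => hs)
  set Φ : (ι → ℝ) × (ι → E) → E := fun p => ∑ i, p.1 i • p.2 i with hΦ
  have hΦc : Continuous Φ := by
    apply continuous_finset_sum
    intro i _
    exact ((continuous_apply i).comp continuous_fst).smul
      ((continuous_apply i).comp continuous_snd)
  have himage : convexHull ℝ s ⊆ Φ '' T := by
    intro x hx
    obtain ⟨ι', hfin, z, w, hzs, hai, hwpos, hwsum, hcombo⟩ :=
      eq_pos_convex_span_of_mem_convexHull hx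
    have hcard : Fintype.card ι' ≤ Fintype.card ι := by
      have h1 := hai.card_le_finrank_succ
      have h2 : Module.finrank ℝ ↥(vectorSpan ℝ (Set.range z)) ≤ k := by
        simpa [finrank_euclideanSpace_fin] using
          Submodule.finrank_le (vectorSpan ℝ (Set.range z))
      have h3 : Fintype.card ι = k + 1 := Fintype.card_fin _
      rw [h3]
      linarith
    obtain ⟨e⟩ := Function.Embedding.nonempty_of_card_le hcard
    set W : ι → ℝ := fun j => ∑ i, if e i = j then w i else 0 with hW
    set Z : ι → E := fun j => if h : ∃ i, e i = j then z h.choose else y₀ with hZ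
    have hZe : ∀ i, Z (e i) = z i := by
      intro i
      have h : ∃ i', e i' = e i := ⟨i, rfl⟩
      have : h.choose = i := e.injective h.choose_spec
      simp [hZ, dif_pos h, this]
    have hWsum : ∑ j, W j = 1 := by
      rw [hW, Finset.sum_comm]
      refine (Finset.sum_congr rfl fun i _ => ?_).trans hwsum
      rw [Finset.sum_eq_single (e i) (fun j _ hj => if_neg (Ne.symm hj))
        (fun h => absurd (Finset.mem_univ _) h), if_pos rfl]
    have hWnn : ∀ j, 0 ≤ W j := by
      intro j
      refine Finset.sum_nonneg fun i _ => ?_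
      split_ifs with h
      exacts [(hwpos i).le, le_rfl]
    refine ⟨(W, Z), ⟨⟨hWnn, hWsum⟩, ?_⟩, ?_⟩
    · intro j _
      by_cases h : ∃ i, e i = j
      · simp only [hZ, dif_pos h]; exact hzs ⟨h.choose, rfl⟩
      · simp only [hZ, dif_neg h]; exact hy₀
    · show ∑ j, W j • Z j = x
      rw [← hcombo]
      have key : ∀ j, W j • Z j = ∑ i, if e i = j then w i • Z j else 0 := by
        intro j
        rw [hW]
        rw [Finset.sum_smul]
        exact Finset.sum_congr rfl fun i _ => by split_ifs <;> simp
      simp_rw [key]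
      rw [Finset.sum_comm]
      refine Finset.sum_congr rfl fun i _ => ?_
      have key2 : ∀ j, (if e i = j then w i • Z j else 0)
          = (if e i = j then w i • z i else 0) := by
        intro j; split_ifs with h
        · rw [← h, hZe]
        · rfl
      simp_rw [key2]
      rw [Finset.sum_ite_eq]
      simp
  have hsub : Φ '' T ⊆ convexHull ℝ s := by
    rintro - ⟨⟨W, Z⟩, ⟨⟨hWnn, hWsum⟩, hZ⟩, rfl⟩
    exact (convex_convexHull ℝ s).sum_mem (fun i _ => hWnn i) hWsum
      (fun i _ => subset_convexHull ℝ s (hZ i (mem_univ i)))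
  have : convexHull ℝ s = Φ '' T := Subset.antisymm himage hsub
  rw [this]
  exact hTc.image hΦc

/-- Proposition 2.2: for a continuous convex function `f` on an open
convex set `U ⊆ ℝ^k`, every extreme point `a` of `∂f(x)` is a limit of gradients
`f'(x_n)` at differentiability points `x_n → x` (differentiability at a point
meaning that the subdifferential there is a singleton, whose element is the gradient). -/
theorem stmt0 (U : Set (EuclideanSpace ℝ (Fin k))) (hUopen : IsOpen U) (hUconv : Convex ℝ U)
    (f : EuclideanSpace ℝ (Fin k) → ℝ) (hconv : ConvexOn ℝ U f) (hcont : ContinuousOn f U)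
    (x : EuclideanSpace ℝ (Fin k)) (hx : x ∈ U)
    (a : EuclideanSpace ℝ (Fin k)) (ha : a ∈ Set.extremePoints ℝ (subdiffR f U x)) :
    ∃ (xs : ℕ → EuclideanSpace ℝ (Fin k)) (g : ℕ → EuclideanSpace ℝ (Fin k)),
      (∀ n, xs n ∈ U) ∧
      Tendsto xs atTop (𝓝 x) ∧
      (∀ n, subdiffR f U (xs n) = {g n}) ∧
      Tendsto g atTop (𝓝 a) := by
  classical
  obtain ⟨ε, hε, hballU⟩ := Metric.isOpen_iff.1 hUopen x hx
  set r := ε / 8 with hrdef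
  have hr0 : 0 < r := by positivity
  have hball7 : Metric.closedBall x (7 * r) ⊆ U :=
    fun z hz => hballU (lt_of_le_of_lt (Metric.mem_closedBall.1 hz) (by rw [hrdef]; linarith))
  have hball3 : Metric.ball x (3 * r) ⊆ U :=
    fun z hz => hball7 (Metric.mem_closedBall.2 (le_of_lt (lt_of_lt_of_le hz (by linarith))))
  obtain ⟨M, hM⟩ := (isCompact_closedBall x (7 * r)).exists_bound_of_continuousOn
    (hcont.mono hball7)
  set B := 2 * M / r with hBdef
  have hMx : 0 ≤ M := le_trans (norm_nonneg _)
    (hM x (Metric.mem_closedBall_self (by positivity)))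
  have hB0 : 0 ≤ B := by positivity
  -- gradient bound
  have hbound : ∀ y ∈ Metric.ball x (3 * r), ∀ v ∈ subdiffR f U y, ‖v‖ ≤ B := by
    intro y hy v hv
    rcases eq_or_ne v 0 with rfl | hv0
    · simpa using hB0
    · set u : EuclideanSpace ℝ (Fin k) := ‖v‖⁻¹ • v with hu
      have hunorm : ‖u‖ = 1 := norm_smul_inv_norm hv0
      set z := y + r • u with hz
      have hzy : dist z y = r := by
        rw [hz, dist_self_add_left, norm_smul, hunorm, Real.norm_eq_abs,
          abs_of_pos hr0, mul_one]
      have hz7 : z ∈ Metric.closedBall x (7 * r) := by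
        rw [Metric.mem_closedBall]
        calc dist z x ≤ dist z y + dist y x := dist_triangle _ _ _
        _ ≤ r + 3 * r := by
            have := Metric.mem_ball.1 hy
            linarith [hzy]
        _ ≤ 7 * r := by linarith
      have hy7 : y ∈ Metric.closedBall x (7 * r) :=
        Metric.mem_closedBall.2 (le_trans (Metric.mem_ball.1 hy).le (by linarith))
      have hineq := hv z (hball7 hz7)
      have hzsub : z - y = r • u := by rw [hz]; abel
      rw [hzsub, real_inner_smul_right, hu, real_inner_smul_right,
        real_inner_self_eq_norm_sq] at hineq
      have hvnorm : ‖v‖⁻¹ * ‖v‖ ^ 2 = ‖v‖ := by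
        rw [sq, ← mul_assoc, inv_mul_cancel₀ (norm_ne_zero_iff.2 hv0), one_mul]
      rw [hvnorm] at hineq
      have hfz := hM z hz7
      have hfy := hM y hy7
      rw [Real.norm_eq_abs] at hfz hfy
      have : r * ‖v‖ ≤ 2 * M := by
        have := abs_le.1 hfz
        have := abs_le.1 hfy
        linarith [abs_le.1 hfz, abs_le.1 hfy]
      rw [hBdef, le_div_iff₀ hr0]
      linarith
  -- Lipschitz constant on ball x (3r)
  obtain ⟨K, hK⟩ : ∃ K, LipschitzOnWith K f (Metric.ball x (3 * r)) := by
    have h4U : Metric.ball x (4 * r) ⊆ U :=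
      fun z hz => hball7 (Metric.mem_closedBall.2 (le_of_lt (lt_of_lt_of_le hz (by linarith))))
    have hconv4 : ConvexOn ℝ (Metric.ball x (4 * r)) f :=
      hconv.subset h4U (convex_ball x (4 * r))
    have hbdd : Bornology.IsBounded (f '' Metric.ball x (4 * r)) := by
      have hcomp : IsCompact (f '' Metric.closedBall x (7 * r)) :=
        (isCompact_closedBall x (7 * r)).image_of_continuousOn (hcont.mono hball7)
      exact hcomp.isBounded.subset (image_mono
        (fun z hz => Metric.mem_closedBall.2 (le_of_lt (lt_of_lt_of_le hz (by linarith)))))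
    exact hconv4.exists_lipschitzOnWith_of_isBounded (by linarith) hbdd
  -- density of differentiability points
  have hdense : ∀ c ∈ Metric.ball x (2 * r), ∀ δ : ℝ, 0 < δ →
      ∃ y, y ∈ Metric.ball x (3 * r) ∧ dist y c < δ ∧ DifferentiableAt ℝ f y := by
    intro c hc δ hδ
    set δ' := min δ r with hδ'
    have hδ'0 : 0 < δ' := lt_min hδ hr0
    have hsubball : Metric.ball c δ' ⊆ Metric.ball x (3 * r) := by
      intro z hz
      rw [Metric.mem_ball] at *
      calc dist z x ≤ dist z c + dist c x := dist_triangle _ _ _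
      _ < δ' + 2 * r := by linarith [Metric.mem_ball.1 hc]
      _ ≤ 3 * r := by linarith [min_le_right δ r]
    have hae := hK.ae_differentiableWithinAt_of_mem (μ := MeasureTheory.volume)
    set G : Set (EuclideanSpace ℝ (Fin k)) :=
      {y | y ∈ Metric.ball x (3 * r) → DifferentiableWithinAt ℝ f (Metric.ball x (3 * r)) y}
    have hGae : MeasureTheory.volume Gᶜ = 0 := hae
    have hpos : 0 < MeasureTheory.volume (Metric.ball c δ') := Metric.measure_ball_pos _ _ hδ'0
    have hnotsub : ¬ (Metric.ball c δ' ⊆ Gᶜ) := by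
      intro hsub
      exact absurd (MeasureTheory.measure_mono_null hsub hGae) (ne_of_gt hpos)
    obtain ⟨y, hyball, hyG⟩ := not_subset.1 hnotsub
    rw [notMem_compl_iff] at hyG
    have hy3 := hsubball hyball
    refine ⟨y, hy3, Metric.mem_ball.1 hyball |>.trans_le (min_le_left δ r), ?_⟩
    exact (hyG hy3).differentiableAt (Metric.isOpen_ball.mem_nhds hy3)
  -- the set D of limits of nearby gradients
  set D : Set (EuclideanSpace ℝ (Fin k)) :=
    {v | ∀ ε' : ℝ, 0 < ε' → ∃ y, y ∈ U ∧ dist y x < ε' ∧ DifferentiableAt ℝ f y ∧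
      dist (gradient f y) v < ε'} with hD
  -- D ⊆ ∂f(x)
  have hDK : D ⊆ subdiffR f U x := by
    intro v hv
    choose y hyU hyx hydiff hgrad using fun n : ℕ => hv (1 / (n + 1)) (by positivity)
    exact mem_subdiffR_of_tendsto hUopen hcont hx hyU (tendsto_of_dist_lt hyx)
      (fun n => gradient_mem_subdiffR hUopen hconv (hyU n) (hydiff n))
      (tendsto_of_dist_lt hgrad)
  -- D is closed
  have hDclosed : IsClosed D := by
    refine isClosed_of_closure_subset ?_
    intro v hv ε' hε'
    obtain ⟨u, huD, huv⟩ := Metric.mem_closure_iff.1 hv (ε' / 2) (by positivity)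
    obtain ⟨y, hyU, hyx, hydiff, hgrad⟩ := huD (ε' / 2) (by positivity)
    refine ⟨y, hyU, lt_of_lt_of_le hyx (by linarith), hydiff, ?_⟩
    calc dist (gradient f y) v ≤ dist (gradient f y) u + dist u v := dist_triangle _ _ _
    _ < ε' / 2 + ε' / 2 := add_lt_add hgrad (by rw [dist_comm] at huv; exact huv)
    _ = ε' := by ring
  -- the maximizer property
  have hmax : ∀ d : EuclideanSpace ℝ (Fin k), ∃ v ∈ D,
      ∀ w ∈ subdiffR f U x, (inner ℝ w d : ℝ) ≤ inner ℝ v d := by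
    intro d
    have hd1 : (1:ℝ) ≤ 1 + ‖d‖ := by linarith [norm_nonneg d]
    have hden : ∀ n : ℕ, (0:ℝ) < ((n:ℝ) + 1) * (1 + ‖d‖) := fun n => by positivity
    set t : ℕ → ℝ := fun n => r / (((n:ℝ) + 1) * (1 + ‖d‖)) with htdef
    have htpos : ∀ n, 0 < t n := fun n => div_pos hr0 (hden n)
    have hN1 : ∀ n : ℕ, (1:ℝ) ≤ (n:ℝ) + 1 := fun n => by linarith [Nat.cast_nonneg (α := ℝ) n]
    have htd : ∀ n, t n * ‖d‖ ≤ r / ((n:ℝ) + 1) := by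
      intro n
      rw [htdef]
      rw [div_mul_eq_mul_div, div_le_div_iff₀ (hden n) (by positivity)]
      have := hN1 n
      nlinarith [norm_nonneg d, hr0.le]
    have htr : ∀ n, t n ≤ r / ((n:ℝ) + 1) := by
      intro n
      rw [htdef, div_le_div_iff₀ (hden n) (by positivity)]
      nlinarith [norm_nonneg d, hr0.le, hN1 n,
        mul_nonneg (mul_nonneg hr0.le (by linarith [Nat.cast_nonneg (α := ℝ) n] : (0:ℝ) ≤ (n:ℝ)+1)) (norm_nonneg d)]
    set c : ℕ → EuclideanSpace ℝ (Fin k) := fun n => x + t n • d with hcdef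
    have hcb : ∀ n, c n ∈ Metric.ball x (2 * r) := by
      intro n
      rw [hcdef, Metric.mem_ball, dist_self_add_left, norm_smul, Real.norm_eq_abs,
        abs_of_pos (htpos n)]
      have h2 := htd n
      have h3 : r / ((n:ℝ) + 1) ≤ r := by
        rw [div_le_iff₀ (by positivity : (0:ℝ) < (n:ℝ)+1)]
        nlinarith [hr0.le, hN1 n]
      linarith
    choose y hy3 hyc hydiff using fun n =>
      hdense (c n) (hcb n) (t n / ((n:ℝ) + 1)) (by positivity)
    set g : ℕ → EuclideanSpace ℝ (Fin k) := fun n => gradient f (y n) with hgdef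
    have hyU : ∀ n, y n ∈ U := fun n => hball3 (hy3 n)
    have hgsub : ∀ n, g n ∈ subdiffR f U (y n) := fun n =>
      gradient_mem_subdiffR hUopen hconv (hyU n) (hydiff n)
    have hgB : ∀ n, g n ∈ Metric.closedBall (0 : EuclideanSpace ℝ (Fin k)) B := fun n =>
      mem_closedBall_zero_iff.2 (hbound _ (hy3 n) _ (hgsub n))
    obtain ⟨v, hvmem, φ, hφ, hgv⟩ :=
      tendsto_subseq_of_bounded Metric.isBounded_closedBall hgB
    have hyx : Tendsto y atTop (𝓝 x) := by
      apply tendsto_of_dist_le_div (2 * r)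
      intro n
      have h1 : dist (y n) (c n) ≤ t n / ((n:ℝ) + 1) := (hyc n).le
      have h2 : dist (c n) x = t n * ‖d‖ := by
        rw [hcdef, dist_self_add_left, norm_smul, Real.norm_eq_abs, abs_of_pos (htpos n)]
      have h3 : t n / ((n:ℝ) + 1) ≤ t n :=
        div_le_self (htpos n).le (hN1 n)
      calc dist (y n) x ≤ dist (y n) (c n) + dist (c n) x := dist_triangle _ _ _
      _ ≤ t n + t n * ‖d‖ := by rw [h2]; linarith
      _ ≤ r / ((n:ℝ)+1) + r / ((n:ℝ)+1) := add_le_add (htr n) (htd n)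
      _ = 2 * r / ((n:ℝ)+1) := by ring
    refine ⟨v, ?_, ?_⟩
    · intro ε' hε'
      have h1 : Tendsto (fun m => y (φ m)) atTop (𝓝 x) := hyx.comp hφ.tendsto_atTop
      have h2 : ∀ᶠ m in atTop, y (φ m) ∈ Metric.ball x ε' :=
        h1.eventually_mem (Metric.ball_mem_nhds x hε')
      have h3 : ∀ᶠ m in atTop, (g ∘ φ) m ∈ Metric.ball v ε' :=
        hgv.eventually_mem (Metric.ball_mem_nhds v hε')
      obtain ⟨m, hm2, hm3⟩ := (h2.and h3).exists
      exact ⟨y (φ m), hyU _, Metric.mem_ball.1 hm2, hydiff _,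
        Metric.mem_ball.1 hm3⟩
    · intro w hw
      have key : ∀ n, (inner ℝ w d : ℝ) ≤ inner ℝ (g n) d + (B + ‖w‖) * (1 / ((n:ℝ) + 1)) := by
        intro n
        have hw1 := hw (y n) (hyU n)
        have hg1 := hgsub n x hx
        have hmono : (inner ℝ w (y n - x) : ℝ) ≤ inner ℝ (g n) (y n - x) := by
          have hng : (inner ℝ (g n) (x - y n) : ℝ) = -(inner ℝ (g n) (y n - x) : ℝ) := by
            rw [← inner_neg_right]
            congr 1
            abel
          rw [hng] at hg1
          linarith
        set e := y n - c n with hedef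
        have hyx_eq : y n - x = t n • d + e := by rw [hedef, hcdef]; beta_reduce; abel
        have he : ‖e‖ ≤ t n / ((n:ℝ) + 1) := by
          rw [hedef, ← dist_eq_norm]
          exact (hyc n).le
        have hexp : (inner ℝ w (y n - x) : ℝ) = t n * inner ℝ w d + inner ℝ w e := by
          rw [hyx_eq, inner_add_right, real_inner_smul_right]
        have hexp2 : (inner ℝ (g n) (y n - x) : ℝ) = t n * inner ℝ (g n) d + inner ℝ (g n) e := by
          rw [hyx_eq, inner_add_right, real_inner_smul_right]
        have hie1 : |(inner ℝ w e : ℝ)| ≤ ‖w‖ * (t n / ((n:ℝ)+1)) :=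
          (abs_real_inner_le_norm w e).trans
            (mul_le_mul_of_nonneg_left he (norm_nonneg w))
        have hie2 : |(inner ℝ (g n) e : ℝ)| ≤ B * (t n / ((n:ℝ)+1)) :=
          (abs_real_inner_le_norm _ _).trans
            (mul_le_mul (hbound _ (hy3 n) _ (hgsub n)) he (norm_nonneg e) hB0)
        have hcomb : t n * (inner ℝ w d : ℝ) ≤
            t n * ((inner ℝ (g n) d : ℝ) + (B + ‖w‖) * (1 / ((n:ℝ) + 1))) := by
          rw [hexp, hexp2] at hmono
          have ha1 := abs_le.1 hie1
          have ha2 := abs_le.1 hie2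
          have hrw : t n * ((inner ℝ (g n) d : ℝ) + (B + ‖w‖) * (1 / ((n:ℝ) + 1)))
              = t n * (inner ℝ (g n) d : ℝ) + B * (t n / ((n:ℝ)+1)) + ‖w‖ * (t n / ((n:ℝ)+1)) := by
            field_simp
            ring
          rw [hrw]
          linarith
        exact le_of_mul_le_mul_left hcomb (htpos n)
      have hlim : Tendsto (fun m => (inner ℝ (g (φ m)) d : ℝ) + (B + ‖w‖) * (1 / ((φ m : ℝ) + 1)))
          atTop (𝓝 ((inner ℝ v d : ℝ) + (B + ‖w‖) * 0)) := by
        apply Tendsto.add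
        · exact hgv.inner tendsto_const_nhds
        · exact (tendsto_one_div_add_atTop_nhds_zero_nat.comp hφ.tendsto_atTop).const_mul _
      have hfinal := ge_of_tendsto hlim (Eventually.of_forall (fun m => key (φ m)))
      simpa using hfinal
  -- ∂f(x) ⊆ convexHull D
  have hKconv : Convex ℝ (subdiffR f U x) := by
    intro p hp q hq s t hs ht hst
    intro z hz
    have := hp z hz
    have := hq z hz
    rw [inner_add_left, real_inner_smul_left, real_inner_smul_left]
    calc s * (inner ℝ p (z - x) : ℝ) + t * (inner ℝ q (z - x) : ℝ)
        ≤ s * (f z - f x) + t * (f z - f x) :=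
          add_le_add (mul_le_mul_of_nonneg_left (hp z hz) hs)
            (mul_le_mul_of_nonneg_left (hq z hz) ht)
    _ = f z - f x := by rw [← add_mul, hst, one_mul]
  have hDbdd : Bornology.IsBounded D := by
    have : D ⊆ Metric.closedBall 0 B := by
      intro v hv
      exact mem_closedBall_zero_iff.2
        (hbound x (Metric.mem_ball_self (by positivity)) v (hDK hv))
    exact Metric.isBounded_closedBall.subset this
  have hDcomp : IsCompact D := Metric.isCompact_of_isClosed_isBounded hDclosed hDbdd
  have hDne : D.Nonempty := (hmax 0).imp fun v hv => hv.1
  have hullcomp : IsCompact (convexHull ℝ D) := isCompact_convexHull_of_isCompact hDcomp hDne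
  have hsub2 : subdiffR f U x ⊆ convexHull ℝ D := by
    intro w hw
    by_contra hw'
    obtain ⟨ℓ, u, hℓ1, hℓ2⟩ := geometric_hahn_banach_closed_point
      (convex_convexHull ℝ D) hullcomp.isClosed hw'
    set d := (InnerProductSpace.toDual ℝ (EuclideanSpace ℝ (Fin k))).symm ℓ with hd
    have h3 : ∀ z, ℓ z = (inner ℝ z d : ℝ) := fun z => by
      rw [real_inner_comm, hd, InnerProductSpace.toDual_symm_apply]
    obtain ⟨v, hvD, hvmax⟩ := hmax d
    have h1 : ℓ v < u := hℓ1 v (subset_convexHull ℝ D hvD)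
    have h2 : (inner ℝ w d : ℝ) ≤ inner ℝ v d := hvmax w hw
    rw [h3 v] at h1
    rw [h3 w] at hℓ2
    linarith
  have hKeq : subdiffR f U x = convexHull ℝ D :=
    Subset.antisymm hsub2 (convexHull_min hDK hKconv)
  rw [hKeq] at ha
  have haD : a ∈ D := extremePoints_convexHull_subset ha
  -- extract the sequences
  choose xs hxsU hxsx hxsdiff hxsgrad using fun n : ℕ => haD (1 / (n + 1)) (by positivity)
  refine ⟨xs, fun n => gradient f (xs n), hxsU, tendsto_of_dist_lt hxsx, ?_, ?_⟩
  · intro n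
    exact subdiffR_eq_singleton_of_differentiableAt hUopen hconv (hxsU n) (hxsdiff n)
  · exact tendsto_of_dist_lt hxsgrad
end
end

section
/- Let Φ = {log φ_n} be an asymptotically sub-additive potential on a TDS (X,T). The map μ ↦ Φ_*(μ) from the space of T-invariant Borel probability measures (with the weak* topology) to ℝ ∪ {-∞} is upper semi-continuous, and there exists a constant C ∈ ℝ such that Φ_*(μ) ≤ C for all invariant μ. -/
open MeasureTheory Filter Topology Set
open scoped ENNReal NNReal

noncomputable section

/-- Extended logarithm of a nonnegative real number, with `elog 0 = ⊥`. -/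
def elog (r : ℝ) : EReal := if r = 0 then ⊥ else ((Real.log r : ℝ) : EReal)

/-- Extended logarithm on `ℝ≥0∞`. -/
def elogENN (a : ℝ≥0∞) : EReal :=
  if a = 0 then ⊥ else if a = ⊤ then ⊤ else ((Real.log a.toReal : ℝ) : EReal)

variable {X : Type*} [MetricSpace X] [CompactSpace X] [MeasurableSpace X] [BorelSpace X]

/-- A potential: each `φ n` is continuous and nonnegative.  The potential itself is
the sequence `{log φ n}` with values in `ℝ ∪ {-∞}`. -/
def IsPotential (φ : ℕ → X → ℝ) : Prop :=
  ∀ n, Continuous (φ n) ∧ ∀ x, 0 ≤ φ n x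

/-- Sub-additive potential: `φ (n+m) x ≤ φ n x * φ m (T^[n] x)`, i.e.
`log φ (n+m) ≤ log φ n + log φ m ∘ T^n`. -/
def IsSubAdditivePot (T : X → X) (φ : ℕ → X → ℝ) : Prop :=
  IsPotential φ ∧ ∀ n m x, φ (n + m) x ≤ φ n x * φ m (T^[n] x)

/-- `limsup_n (1/n) sup_x |log φ n x - log ψ n x| ≤ ε`, with the convention
`log 0 - log 0 = 0` (and `|log 0 - log c| = ∞` for `c ≠ 0`). -/
def ApproxAtScale (φ ψ : ℕ → X → ℝ) (ε : ℝ) : Prop :=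
  ∀ ε' > ε, ∀ᶠ n : ℕ in atTop, ∀ x : X,
    (φ n x = 0 ↔ ψ n x = 0) ∧
    (φ n x ≠ 0 → |Real.log (φ n x) - Real.log (ψ n x)| ≤ n * ε')

/-- Asymptotically sub-additive potential. -/
def IsAsympSubAdditive (T : X → X) (φ : ℕ → X → ℝ) : Prop :=
  IsPotential φ ∧ ∀ ε > 0, ∃ ψ : ℕ → X → ℝ, IsSubAdditivePot T ψ ∧ ApproxAtScale φ ψ ε

/-- Asymptotically additive potential (via approximation by genuinely additive
potentials `ψ n x = exp (∑_{i<n} g (T^i x))`). -/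
def IsAsympAdditive (T : X → X) (φ : ℕ → X → ℝ) : Prop :=
  IsPotential φ ∧ ∀ ε > 0, ∃ g : X → ℝ, Continuous g ∧
    ApproxAtScale φ (fun n x => Real.exp (∑ i ∈ Finset.range n, g (T^[i] x))) ε

/-- `∫ log f dμ ∈ ℝ ∪ {-∞}`, as the infimum of the integrals of the truncations
`log (max f (exp (-R)))`. -/
def elogInt (μ : Measure X) (f : X → ℝ) : EReal :=
  ⨅ R : ℕ, ((∫ x, Real.log (max (f x) (Real.exp (-(R : ℝ)))) ∂μ : ℝ) : EReal)

/-- `Φ_*(μ) = lim_n (1/n) ∫ log φ n dμ` (written as a `limsup`, which equals the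
limit whenever the latter exists). -/
def potStar (μ : Measure X) (φ : ℕ → X → ℝ) : EReal :=
  limsup (fun n : ℕ => (((n : ℝ)⁻¹ : ℝ) : EReal) * elogInt μ (φ n)) atTop

/-- The sequence `(1/n) log φ n x`, whose limit (when it exists) is the Lyapunov
exponent `λ_Φ(x)`. -/
def lyapSeq (φ : ℕ → X → ℝ) (x : X) : ℕ → EReal :=
  fun n => (((n : ℝ)⁻¹ : ℝ) : EReal) * elog (φ n x)

/-- The `α`-level set `E_Φ(α) = {x : λ_Φ(x) = α}`. -/
def levelSet (φ : ℕ → X → ℝ) (α : EReal) : Set X :=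
  {x | Tendsto (lyapSeq φ x) atTop (𝓝 α)}

/-- `β̄(Φ) = limsup_n (1/n) sup_x log φ n x`. -/
def betaBar (φ : ℕ → X → ℝ) : EReal :=
  limsup (fun n : ℕ => (((n : ℝ)⁻¹ : ℝ) : EReal) * ⨆ x : X, elog (φ n x)) atTop

/-- `β̲(Φ) = limsup_n (1/n) inf_x log φ n x`. -/
def betaLow (φ : ℕ → X → ℝ) : EReal :=
  limsup (fun n : ℕ => (((n : ℝ)⁻¹ : ℝ) : EReal) * ⨅ x : X, elog (φ n x)) atTop

/-- `μ` is a `T`-invariant Borel probability measure. -/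
def InvProb (T : X → X) (μ : Measure X) : Prop :=
  IsProbabilityMeasure μ ∧ μ.map T = μ

/-- Entropy of the finite partition of `X` induced by `p`. -/
def partEnt (μ : Measure X) {S : Type} [Fintype S] (p : X → S) : ℝ :=
  ∑ s : S, Real.negMulLog (μ (p ⁻¹' {s})).toReal

/-- Measure-theoretic (Kolmogorov–Sinai) entropy `h_μ(T)`: supremum over finite
measurable partitions of `lim (1/n) H(⋁_{i<n} T^{-i} P)` (the limit is the inf). -/
def mEnt (T : X → X) (μ : Measure X) : EReal :=
  ⨆ (m : ℕ) (p : X → Fin m) (_ : Measurable p),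
    ⨅ (n : ℕ) (_ : 0 < n),
      (((n : ℝ)⁻¹ * partEnt μ (fun x (i : Fin n) => p (T^[(i : ℕ)] x)) : ℝ) : EReal)

/-- Bowen ball `B_n(x, ε)` in the metric `d_n`. -/
def dynBall (T : X → X) (x : X) (n : ℕ) (ε : ℝ) : Set X :=
  {y | ∀ k < n, dist (T^[k] x) (T^[k] y) < ε}

/-- `M(Z, s, N, ε)`: infimum of `∑ exp (-s n_i)` over countable covers of `Z` by
Bowen balls `B_{n_i}(x_i, ε)` with `n_i ≥ N`. -/
def bowenM (T : X → X) (Z : Set X) (s : ℝ) (N : ℕ) (ε : ℝ) : ℝ≥0∞ :=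
  ⨅ (c : ℕ → X × ℕ) (_ : ∀ i, N ≤ (c i).2)
    (_ : Z ⊆ ⋃ i, dynBall T (c i).1 (c i).2 ε),
    ∑' i, ENNReal.ofReal (Real.exp (-(s * ((c i).2 : ℝ))))

/-- Bowen's topological entropy of `Z` at scale `ε`: the critical value of `s` at
which `M(Z, s, ε) = lim_N M(Z, s, N, ε)` jumps from `∞` to `0`. -/
def entAt (T : X → X) (Z : Set X) (ε : ℝ) : EReal :=
  sInf {s : EReal | ∃ r : ℝ, s = (r : EReal) ∧ (⨆ N, bowenM T Z r N ε) = 0}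

/-- Bowen's topological entropy `h_top(T, Z)` of an arbitrary subset `Z ⊆ X`. -/
def entOf (T : X → X) (Z : Set X) : EReal :=
  ⨆ (ε : ℝ) (_ : 0 < ε), entAt T Z ε

/-- `(n, ε)`-separated subset of `X`. -/
def IsSep (T : X → X) (n : ℕ) (ε : ℝ) (E : Finset X) : Prop :=
  ∀ x ∈ E, ∀ y ∈ E, x ≠ y → ∃ k < n, ε < dist (T^[k] x) (T^[k] y)

/-- `P_n(T, Φ, ε) = sup { ∑_{x ∈ E} φ n x : E is (n,ε)-separated }`. -/
def sepSum (T : X → X) (φ : ℕ → X → ℝ) (n : ℕ) (ε : ℝ) : ℝ≥0∞ :=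
  ⨆ (E : Finset X) (_ : IsSep T n ε E), ∑ x ∈ E, ENNReal.ofReal (φ n x)

/-- Topological pressure `P(T, Φ) = lim_{ε→0} limsup_n (1/n) log P_n(T, Φ, ε)`. -/
def pressure (T : X → X) (φ : ℕ → X → ℝ) : EReal :=
  ⨆ (ε : ℝ) (_ : 0 < ε),
    limsup (fun n : ℕ => (((n : ℝ)⁻¹ : ℝ) : EReal) * elogENN (sepSum T φ n ε)) atTop

/-- The potential `q · Φ = {∑ i, q i * log (φ i) n}`, i.e. `∏ i, (φ i n) ^ (q i)`. -/
def weightedPot {k : ℕ} (φ : Fin k → ℕ → X → ℝ) (q : Fin k → ℝ) : ℕ → X → ℝ :=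
  fun n x => ∏ i, (φ i n x) ^ (q i)

/-- The potential `Φ₁ + ⋯ + Φ_k`, i.e. `∏ i, φ i n`. -/
def sumPot {k : ℕ} (φ : Fin k → ℕ → X → ℝ) : ℕ → X → ℝ :=
  fun n x => ∏ i, φ i n x

end

/-- Dot product on `Fin k → ℝ`. -/
def dotp {k : ℕ} (a b : Fin k → ℝ) : ℝ := ∑ i, a i * b i

/-- The open positive orthant `ℝ_+^k`. -/
def posOrth (k : ℕ) : Set (Fin k → ℝ) := {q | ∀ i, 0 < q i}

/-- `a` is a subgradient of `F` at `q` relative to `U`. -/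
def IsSubgrad {k : ℕ} (U : Set (Fin k → ℝ)) (F : (Fin k → ℝ) → ℝ) (q a : Fin k → ℝ) : Prop :=
  ∀ t ∈ U, dotp a (t - q) ≤ F t - F q


namespace SASP6

lemma ereal_scale_le {a b : ℝ} (ha : 0 ≤ a) {x : EReal} (hx : x ≤ (b : EReal)) :
    (a : EReal) * x ≤ ((a * b : ℝ) : EReal) := by
  rcases ha.eq_or_lt with h | h
  · simp [← h]
  · induction x using EReal.rec with
    | bot => rw [EReal.coe_mul_bot_of_pos h]; exact bot_le
    | coe y =>
        rw [← EReal.coe_mul, EReal.coe_le_coe_iff]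
        exact mul_le_mul_of_nonneg_left (EReal.coe_le_coe_iff.mp hx) ha
    | top => exact absurd hx (by simp)

lemma ereal_lt_unscale {n : ℝ} (hn : 0 < n) {x : EReal} {s : ℝ}
    (h : ((n⁻¹ : ℝ) : EReal) * x < (s : EReal)) : x < ((n * s : ℝ) : EReal) := by
  induction x using EReal.rec with
  | bot => exact EReal.bot_lt_coe _
  | coe y =>
      rw [← EReal.coe_mul, EReal.coe_lt_coe_iff] at h
      rw [EReal.coe_lt_coe_iff]
      have h2 : y = n * (n⁻¹ * y) := by field_simp
      rw [h2]
      exact mul_lt_mul_of_pos_left h hn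
  | top =>
      rw [EReal.coe_mul_top_of_pos (by positivity)] at h
      exact absurd h (by simp)

lemma ereal_le_of_forall_real {p x : EReal} (h : ∀ s : ℝ, p < (s : EReal) → x ≤ (s : EReal)) :
    x ≤ p := by
  by_contra hc
  push_neg at hc
  obtain ⟨r, hr1, hr2⟩ := EReal.exists_between_coe_real hc
  exact absurd (h r hr1) (not_le.mpr hr2)

lemma usc_iInf {ι α : Type*} [TopologicalSpace α] {f : ι → α → EReal}
    (h : ∀ i, UpperSemicontinuous (f i)) :
    UpperSemicontinuous fun x => ⨅ i, f i x := by
  intro x y hy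
  obtain ⟨i, hi⟩ := iInf_lt_iff.mp hy
  exact (h i x y hi).mono fun z hz => lt_of_le_of_lt (iInf_le _ _) hz

variable {X : Type*} [MetricSpace X] [CompactSpace X] [MeasurableSpace X] [BorelSpace X]

lemma cont_integrable (μ : MeasureTheory.Measure X) [MeasureTheory.IsFiniteMeasure μ]
    {g : X → ℝ} (hg : Continuous g) :
    MeasureTheory.Integrable g μ := by
  have := (BoundedContinuousFunction.mkOfCompact (⟨g, hg⟩ : C(X, ℝ))).integrable μ
  exact this

omit [CompactSpace X] [MeasurableSpace X] [BorelSpace X] in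
lemma logmax_cont {g : X → ℝ} (hg : Continuous g) {c : ℝ} (hc : 0 < c) :
    Continuous fun x => Real.log (max (g x) c) :=
  (hg.max continuous_const).log fun _ => (lt_of_lt_of_le hc (le_max_right _ _)).ne'

lemma int_iter {T : X → X} (hT : Continuous T) {μ : MeasureTheory.Measure X}
    (hμ : μ.map T = μ) {g : X → ℝ} (hg : Continuous g) (i : ℕ) :
    ∫ x, g (T^[i] x) ∂μ = ∫ x, g x ∂μ := by
  have hmap : μ.map (T^[i]) = μ := by
    induction i with
    | zero => simp
    | succ n ih =>
      rw [Function.iterate_succ']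
      rw [← Measure.map_map hT.measurable (hT.iterate n).measurable, ih, hμ]
  conv_rhs => rw [← hmap]
  rw [integral_map (hT.iterate i).aemeasurable hg.aestronglyMeasurable]

lemma subadd_prod {T : X → X} {ψ : ℕ → X → ℝ} (hψ : IsSubAdditivePot T ψ)
    (m : ℕ) : ∀ (q r : ℕ) (x : X),
    ψ (q * m + r) x ≤ (∏ j ∈ Finset.range q, ψ m (T^[j * m] x)) * ψ r (T^[q * m] x) := by
  intro q
  induction q with
  | zero => intro r x; simp
  | succ q ih =>
    intro r x
    have h1 : ψ ((q + 1) * m + r) x ≤ ψ m x * ψ (q * m + r) (T^[m] x) := by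
      have h := hψ.2 m (q * m + r) x
      have he : (q + 1) * m + r = m + (q * m + r) := by ring
      rw [he]; exact h
    have h2 := ih r (T^[m] x)
    have hψ0 : ∀ k y, 0 ≤ ψ k y := fun k y => (hψ.1 k).2 y
    have h3 : ψ (q * m + r) (T^[m] x)
        ≤ (∏ j ∈ Finset.range q, ψ m (T^[(j + 1) * m] x)) * ψ r (T^[(q + 1) * m] x) := by
      have hiter : ∀ j : ℕ, T^[j * m] (T^[m] x) = T^[(j + 1) * m] x := by
        intro j
        rw [← Function.iterate_add_apply]
        congr 1
        ring
      calc ψ (q * m + r) (T^[m] x)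
          ≤ (∏ j ∈ Finset.range q, ψ m (T^[j * m] (T^[m] x))) * ψ r (T^[q * m] (T^[m] x)) := h2
        _ = (∏ j ∈ Finset.range q, ψ m (T^[(j + 1) * m] x)) * ψ r (T^[(q + 1) * m] x) := by
            rw [hiter q]
            congr 1
            exact Finset.prod_congr rfl fun j _ => by rw [hiter j]
    calc ψ ((q + 1) * m + r) x ≤ ψ m x * ψ (q * m + r) (T^[m] x) := h1
      _ ≤ ψ m x * ((∏ j ∈ Finset.range q, ψ m (T^[(j + 1) * m] x)) * ψ r (T^[(q + 1) * m] x)) :=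
          mul_le_mul_of_nonneg_left h3 (hψ0 m x)
      _ = (∏ j ∈ Finset.range (q + 1), ψ m (T^[j * m] x)) * ψ r (T^[(q + 1) * m] x) := by
          rw [Finset.prod_range_succ']
          simp only [Nat.zero_mul, Function.iterate_zero_apply]
          ring

lemma auxA {X : Type*} [MetricSpace X] [CompactSpace X] [MeasurableSpace X] [BorelSpace X]
    [Nonempty X] {T : X → X} (hT : Continuous T) {φ ψ : ℕ → X → ℝ}
    (hφc : ∀ k, Continuous (φ k)) (hφ0 : ∀ k x, 0 ≤ φ k x)
    (hψ : IsSubAdditivePot T ψ) {ε : ℝ} (hε : 0 < ε)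
    (happ : ApproxAtScale φ ψ ε) (μ : MeasureTheory.Measure X)
    [MeasureTheory.IsProbabilityMeasure μ] (hinv : μ.map T = μ) (m R : ℕ) :
    potStar μ φ ≤ (((m + 1 : ℝ)⁻¹ * ∫ x, Real.log (max (ψ (m + 1) x) (Real.exp (-(R : ℝ)))) ∂μ
      + 3 * ε : ℝ) : EReal) := by
  classical
  set M : ℕ := m + 1 with hMdef
  have hMpos : 0 < M := Nat.succ_pos m
  have hMR : (0:ℝ) < (M:ℝ) := by exact_mod_cast hMpos
  have hMcast : ((M:ℕ):ℝ) = (m:ℝ) + 1 := by rw [hMdef]; push_cast; ring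
  set c : ℝ := ∫ x, Real.log (max (ψ M x) (Real.exp (-(R : ℝ)))) ∂μ with hcdef
  have hψ0 : ∀ k y, 0 ≤ ψ k y := fun k y => (hψ.1 k).2 y
  have hψc : ∀ k, Continuous (ψ k) := fun k => (hψ.1 k).1
  obtain ⟨B, hB⟩ : ∃ B : ℝ, ∀ r : ℕ, r ≤ M → ∀ y : X, Real.log (max (ψ r y) 1) ≤ B := by
    have key : ∀ r : ℕ, ∃ b : ℝ, ∀ y : X, Real.log (max (ψ r y) 1) ≤ b := by
      intro r
      obtain ⟨y0, _, hy0⟩ := isCompact_univ.exists_isMaxOn univ_nonempty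
        ((logmax_cont (hψc r) one_pos).continuousOn)
      exact ⟨_, fun y => isMaxOn_iff.mp hy0 y (mem_univ y)⟩
    choose b hb using key
    refine ⟨(Finset.range (M + 1)).sup' ⟨0, by simp⟩ b, fun r hr y => ?_⟩
    exact (hb r y).trans (Finset.le_sup' b (Finset.mem_range.mpr (Nat.lt_succ_of_le hr)))
  set D : ℝ := |c| + |B| + 1 with hDdef
  have hD0 : 0 < D := by positivity
  have hcoef : ∀ p : ℝ, 0 < p → D / ε ≤ p → (|c| + B) / p ≤ ε := by
    intro p hp hDp
    have h1 : (|c| + B) / p ≤ D / p := by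
      apply (div_le_div_iff_of_pos_right hp).mpr
      have := le_abs_self B
      linarith
    have h2 : D ≤ p * ε := by rwa [div_le_iff₀ hε] at hDp
    have h3 : D / p ≤ ε := by rw [div_le_iff₀ hp]; linarith
    linarith
  simp only [potStar]
  apply Filter.limsup_le_of_le (by isBoundedDefault)
  have hev1 := happ (2 * ε) (by linarith)
  have hev2 := (tendsto_natCast_atTop_atTop (R := ℝ)).eventually_ge_atTop (D / ε)
  filter_upwards [hev1, hev2, eventually_ge_atTop 1] with n happn hDn hn1
  have hn0 : (0:ℝ) < (n:ℝ) := by exact_mod_cast hn1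
  obtain ⟨q, r, hqr, hr1, hrM⟩ : ∃ q r : ℕ, q * M + r = n ∧ 1 ≤ r ∧ r ≤ M := by
    have h3 := Nat.div_add_mod (n - 1) M
    have h4 : (n - 1) % M < M := Nat.mod_lt _ hMpos
    refine ⟨(n - 1) / M, (n - 1) % M + 1, ?_, Nat.succ_le_succ (Nat.zero_le _), h4⟩
    have he : (n - 1) / M * M + ((n - 1) % M + 1)
        = (M * ((n - 1) / M) + (n - 1) % M) + 1 := by ring
    rw [he, h3, Nat.sub_add_cancel hn1]
  have hq_le : (q : ℝ) * (M:ℝ) ≤ (n:ℝ) := by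
    have h : q * M ≤ n := hqr ▸ Nat.le_add_right _ _
    exact_mod_cast h
  have hn_le : (n : ℝ) ≤ (q:ℝ) * (M:ℝ) + (M:ℝ) := by
    have h : n ≤ q * M + M := by rw [← hqr]; exact Nat.add_le_add_left hrM _
    exact_mod_cast h
  have hpt : ∀ x : X, Real.log (max (φ n x) (Real.exp (-((q * R : ℕ) : ℝ))))
      ≤ 2 * (n:ℝ) * ε + ((∑ j ∈ Finset.range q,
          Real.log (max (ψ M (T^[j * M] x)) (Real.exp (-(R : ℝ)))))
        + Real.log (max (ψ r (T^[q * M] x)) 1)) := by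
    intro x
    obtain ⟨hzero, hlog⟩ := happn x
    have h2nε : (0:ℝ) ≤ 2 * (n:ℝ) * ε := by positivity
    have h1 : φ n x ≤ Real.exp (2 * (n:ℝ) * ε) * ψ n x := by
      rcases eq_or_ne (φ n x) 0 with h | h
      · rw [h]
        have := hψ0 n x
        positivity
      · have hψne : ψ n x ≠ 0 := fun hh => h (hzero.mpr hh)
        have hψpos : 0 < ψ n x := (hψ0 n x).lt_of_ne (Ne.symm hψne)
        have hφpos : 0 < φ n x := (hφ0 n x).lt_of_ne (Ne.symm h)
        have hd := abs_le.mp (hlog h)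
        calc φ n x = Real.exp (Real.log (φ n x)) := (Real.exp_log hφpos).symm
          _ ≤ Real.exp (2 * (n:ℝ) * ε + Real.log (ψ n x)) := by
              apply Real.exp_le_exp.mpr
              have := hd.2
              linarith
          _ = Real.exp (2 * (n:ℝ) * ε) * ψ n x := by rw [Real.exp_add, Real.exp_log hψpos]
    have h2 : ψ n x ≤ (∏ j ∈ Finset.range q, ψ M (T^[j * M] x)) * ψ r (T^[q * M] x) := by
      have h := subadd_prod hψ M q r x
      rwa [hqr] at h
    set P : ℝ := ∏ j ∈ Finset.range q, max (ψ M (T^[j * M] x)) (Real.exp (-(R : ℝ))) with hP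
    set Q : ℝ := max (ψ r (T^[q * M] x)) 1 with hQ
    have hPpos : 0 < P := Finset.prod_pos fun j _ => lt_max_of_lt_right (Real.exp_pos _)
    have hQpos : 0 < Q := lt_max_of_lt_right one_pos
    have hPprod : (∏ j ∈ Finset.range q, ψ M (T^[j * M] x)) ≤ P :=
      Finset.prod_le_prod (fun j _ => hψ0 _ _) (fun j _ => le_max_left _ _)
    have h3 : max (φ n x) (Real.exp (-((q * R : ℕ) : ℝ)))
        ≤ Real.exp (2 * (n:ℝ) * ε) * (P * Q) := by
      apply max_le
      · calc φ n x ≤ Real.exp (2 * (n:ℝ) * ε) * ψ n x := h1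
          _ ≤ Real.exp (2 * (n:ℝ) * ε) * (P * Q) := by
              apply mul_le_mul_of_nonneg_left _ (Real.exp_pos _).le
              calc ψ n x ≤ (∏ j ∈ Finset.range q, ψ M (T^[j * M] x)) * ψ r (T^[q * M] x) := h2
                _ ≤ P * Q := mul_le_mul hPprod (le_max_left _ _) (hψ0 _ _) hPpos.le
      · have hPe : Real.exp (-((q * R : ℕ) : ℝ)) ≤ P := by
          have he : Real.exp (-((q * R : ℕ) : ℝ))
              = ∏ _j ∈ Finset.range q, Real.exp (-(R : ℝ)) := by
            rw [Finset.prod_const, Finset.card_range, ← Real.exp_nat_mul]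
            congr 1
            push_cast
            ring
          rw [he]
          exact Finset.prod_le_prod (fun _ _ => (Real.exp_pos _).le) (fun _ _ => le_max_right _ _)
        calc Real.exp (-((q * R : ℕ) : ℝ)) ≤ P := hPe
          _ = 1 * (P * 1) := by ring
          _ ≤ Real.exp (2 * (n:ℝ) * ε) * (P * Q) := by
              apply mul_le_mul (Real.one_le_exp h2nε) _ (by positivity) (Real.exp_pos _).le
              exact mul_le_mul_of_nonneg_left (le_max_right _ _) hPpos.le
    calc Real.log (max (φ n x) (Real.exp (-((q * R : ℕ) : ℝ))))
        ≤ Real.log (Real.exp (2 * (n:ℝ) * ε) * (P * Q)) :=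
          Real.log_le_log (lt_max_of_lt_right (Real.exp_pos _)) h3
      _ = 2 * (n:ℝ) * ε + (Real.log P + Real.log Q) := by
          rw [Real.log_mul (Real.exp_ne_zero _) (by positivity), Real.log_exp,
            Real.log_mul hPpos.ne' hQpos.ne']
      _ = _ := by
          rw [hP, Real.log_prod (fun j _ => (lt_max_of_lt_right (Real.exp_pos _)).ne')]
  have hcψM : Continuous fun y => Real.log (max (ψ M y) (Real.exp (-(R : ℝ)))) :=
    logmax_cont (hψc M) (Real.exp_pos _)
  have hintS : ∀ j : ℕ, MeasureTheory.Integrable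
      (fun x => Real.log (max (ψ M (T^[j * M] x)) (Real.exp (-(R : ℝ))))) μ :=
    fun j => cont_integrable μ (hcψM.comp (hT.iterate _))
  have hconth : Continuous fun x => Real.log (max (ψ r (T^[q * M] x)) 1) :=
    (logmax_cont (hψc r) one_pos).comp (hT.iterate _)
  have hinth : MeasureTheory.Integrable (fun x => Real.log (max (ψ r (T^[q * M] x)) 1)) μ :=
    cont_integrable μ hconth
  have hintLHS : MeasureTheory.Integrable
      (fun x => Real.log (max (φ n x) (Real.exp (-((q * R : ℕ) : ℝ))))) μ :=
    cont_integrable μ (logmax_cont (hφc n) (Real.exp_pos _))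
  have hIle : ∫ x, Real.log (max (φ n x) (Real.exp (-((q * R : ℕ) : ℝ)))) ∂μ
      ≤ 2 * (n:ℝ) * ε + ((q : ℝ) * c + ∫ x, Real.log (max (ψ r (T^[q * M] x)) 1) ∂μ) := by
    have hintsum : MeasureTheory.Integrable (fun x => ∑ j ∈ Finset.range q,
        Real.log (max (ψ M (T^[j * M] x)) (Real.exp (-(R : ℝ))))) μ :=
      MeasureTheory.integrable_finset_sum _ fun j _ => hintS j
    have hint23 : MeasureTheory.Integrable (fun x => (∑ j ∈ Finset.range q,
        Real.log (max (ψ M (T^[j * M] x)) (Real.exp (-(R : ℝ)))))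
        + Real.log (max (ψ r (T^[q * M] x)) 1)) μ := hintsum.add hinth
    have hintRHS : MeasureTheory.Integrable (fun x => 2 * (n:ℝ) * ε + ((∑ j ∈ Finset.range q,
        Real.log (max (ψ M (T^[j * M] x)) (Real.exp (-(R : ℝ)))))
        + Real.log (max (ψ r (T^[q * M] x)) 1))) μ :=
      (MeasureTheory.integrable_const _).add hint23
    have step1 : ∫ x, Real.log (max (φ n x) (Real.exp (-((q * R : ℕ) : ℝ)))) ∂μ
        ≤ ∫ x, (2 * (n:ℝ) * ε + ((∑ j ∈ Finset.range q,
            Real.log (max (ψ M (T^[j * M] x)) (Real.exp (-(R : ℝ)))))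
          + Real.log (max (ψ r (T^[q * M] x)) 1))) ∂μ :=
      MeasureTheory.integral_mono hintLHS hintRHS hpt
    rw [MeasureTheory.integral_add (MeasureTheory.integrable_const _) hint23,
      MeasureTheory.integral_add hintsum hinth, MeasureTheory.integral_const,
      MeasureTheory.integral_finset_sum _ (fun j _ => hintS j)] at step1
    have hsum : ∑ j ∈ Finset.range q,
        ∫ x, Real.log (max (ψ M (T^[j * M] x)) (Real.exp (-(R : ℝ)))) ∂μ = (q : ℝ) * c := by
      have hcongr : ∀ j ∈ Finset.range q,
          ∫ x, Real.log (max (ψ M (T^[j * M] x)) (Real.exp (-(R : ℝ)))) ∂μ = c :=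
        fun j _ => int_iter hT hinv hcψM _
      rw [Finset.sum_congr rfl hcongr, Finset.sum_const, Finset.card_range, nsmul_eq_mul]
    rw [hsum] at step1
    simpa [MeasureTheory.measure_univ] using step1
  have hhB : ∫ x, Real.log (max (ψ r (T^[q * M] x)) 1) ∂μ ≤ B := by
    have h := MeasureTheory.integral_mono hinth (MeasureTheory.integrable_const B)
      (fun x => hB r hrM _)
    simpa [MeasureTheory.measure_univ] using h
  have hkey : elogInt μ (φ n) ≤ ((2 * (n:ℝ) * ε + ((q : ℝ) * c + B) : ℝ) : EReal) := by
    have h0 : elogInt μ (φ n)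
        ≤ ((∫ x, Real.log (max (φ n x) (Real.exp (-((q * R : ℕ) : ℝ)))) ∂μ : ℝ) : EReal) := by
      simp only [elogInt]
      exact iInf_le _ (q * R)
    refine h0.trans ?_
    rw [EReal.coe_le_coe_iff]
    linarith
  refine le_trans (ereal_scale_le (by positivity) hkey) ?_
  rw [EReal.coe_le_coe_iff]
  have hqc : (q : ℝ) * c ≤ ((n:ℝ) / (M:ℝ)) * c + |c| := by
    rcases le_or_gt 0 c with h | h
    · have hq2 : (q:ℝ) ≤ (n:ℝ) / (M:ℝ) := by rw [le_div_iff₀ hMR]; linarith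
      nlinarith [abs_nonneg c]
    · have hq3 : (n:ℝ) / (M:ℝ) - 1 ≤ (q:ℝ) := by
        rw [sub_le_iff_le_add, div_le_iff₀ hMR]
        nlinarith
      have habs : |c| = -c := abs_of_neg h
      nlinarith [mul_le_mul_of_nonpos_right hq3 h.le]
  have e1 : (n:ℝ)⁻¹ * (2 * (n:ℝ) * ε + ((q:ℝ) * c + B)) = 2 * ε + ((q:ℝ) * c + B) / (n:ℝ) := by
    field_simp
  have e2 : ((n:ℝ) / (M:ℝ) * c + |c| + B) / (n:ℝ) = ((M:ℝ))⁻¹ * c + (|c| + B) / (n:ℝ) := by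
    field_simp
    ring
  have h1 : ((q:ℝ) * c + B) / (n:ℝ) ≤ ((n:ℝ) / (M:ℝ) * c + |c| + B) / (n:ℝ) :=
    (div_le_div_iff_of_pos_right hn0).mpr (by linarith)
  have h2 := hcoef (n:ℝ) hn0 hDn
  rw [e1]
  rw [e2] at h1
  rw [← hMcast]
  linarith

lemma auxB {X : Type*} [MetricSpace X] [CompactSpace X] [MeasurableSpace X] [BorelSpace X]
    {T : X → X} {φ ψ : ℕ → X → ℝ}
    (hφc : ∀ k, Continuous (φ k)) (hφ0 : ∀ k x, 0 ≤ φ k x)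
    (hψ : IsSubAdditivePot T ψ) {ε : ℝ} (hε : 0 < ε)
    (happ : ApproxAtScale φ ψ ε) (μ : MeasureTheory.Measure X)
    [MeasureTheory.IsProbabilityMeasure μ]
    {s : ℝ} (hs : potStar μ φ < (s : EReal)) :
    ∃ m R : ℕ, ((m + 1 : ℝ))⁻¹ * ∫ x, Real.log (max (ψ (m + 1) x) (Real.exp (-(R : ℝ)))) ∂μ
      ≤ s + 2 * ε := by
  simp only [potStar] at hs
  have hev0 := Filter.eventually_lt_of_limsup_lt hs (by isBoundedDefault)
  obtain ⟨n, h1, h2, h3⟩ :=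
    (hev0.and ((happ (2 * ε) (by linarith)).and (eventually_ge_atTop 1))).exists
  have hn0 : (0:ℝ) < (n:ℝ) := by exact_mod_cast h3
  have hlt2 : elogInt μ (φ n) < (((n:ℝ) * s : ℝ) : EReal) := ereal_lt_unscale hn0 h1
  obtain ⟨R, hR⟩ : ∃ R : ℕ, ((∫ x, Real.log (max (φ n x) (Real.exp (-(R:ℝ)))) ∂μ : ℝ) : EReal)
      < (((n:ℝ) * s : ℝ) : EReal) := by
    simp only [elogInt] at hlt2
    exact iInf_lt_iff.mp hlt2
  rw [EReal.coe_lt_coe_iff] at hR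
  have hpt : ∀ x, Real.log (max (ψ n x) (Real.exp (-(R:ℝ))))
      ≤ 2 * (n:ℝ) * ε + Real.log (max (φ n x) (Real.exp (-(R:ℝ)))) := by
    intro x
    obtain ⟨hzero, hlog⟩ := h2 x
    have h2nε : (0:ℝ) ≤ 2 * (n:ℝ) * ε := by positivity
    have h1' : ψ n x ≤ Real.exp (2 * (n:ℝ) * ε) * φ n x := by
      rcases eq_or_ne (ψ n x) 0 with h | h
      · rw [h]
        have := hφ0 n x
        positivity
      · have hφne : φ n x ≠ 0 := fun hh => h (hzero.mp hh)
        have hφpos : 0 < φ n x := (hφ0 n x).lt_of_ne (Ne.symm hφne)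
        have hψpos : 0 < ψ n x := ((hψ.1 n).2 x).lt_of_ne (Ne.symm h)
        have hd := abs_le.mp (hlog hφne)
        calc ψ n x = Real.exp (Real.log (ψ n x)) := (Real.exp_log hψpos).symm
          _ ≤ Real.exp (2 * (n:ℝ) * ε + Real.log (φ n x)) := by
              apply Real.exp_le_exp.mpr
              have := hd.1
              linarith
          _ = _ := by rw [Real.exp_add, Real.exp_log hφpos]
    have hmax : max (ψ n x) (Real.exp (-(R:ℝ)))
        ≤ Real.exp (2 * (n:ℝ) * ε) * max (φ n x) (Real.exp (-(R:ℝ))) := by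
      apply max_le
      · exact h1'.trans (mul_le_mul_of_nonneg_left (le_max_left _ _) (Real.exp_pos _).le)
      · calc Real.exp (-(R:ℝ)) = 1 * Real.exp (-(R:ℝ)) := (one_mul _).symm
          _ ≤ Real.exp (2 * (n:ℝ) * ε) * max (φ n x) (Real.exp (-(R:ℝ))) :=
            mul_le_mul (Real.one_le_exp h2nε) (le_max_right _ _) (Real.exp_pos _).le
              (Real.exp_pos _).le
    calc Real.log (max (ψ n x) (Real.exp (-(R:ℝ))))
        ≤ Real.log (Real.exp (2 * (n:ℝ) * ε) * max (φ n x) (Real.exp (-(R:ℝ)))) :=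
          Real.log_le_log (lt_max_of_lt_right (Real.exp_pos _)) hmax
      _ = 2 * (n:ℝ) * ε + Real.log (max (φ n x) (Real.exp (-(R:ℝ)))) := by
          rw [Real.log_mul (Real.exp_ne_zero _) (lt_max_of_lt_right (Real.exp_pos _)).ne',
            Real.log_exp]
  have hint1 : MeasureTheory.Integrable (fun x => Real.log (max (ψ n x) (Real.exp (-(R:ℝ))))) μ :=
    cont_integrable μ (logmax_cont (hψ.1 n).1 (Real.exp_pos _))
  have hint2 : MeasureTheory.Integrable (fun x => Real.log (max (φ n x) (Real.exp (-(R:ℝ))))) μ :=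
    cont_integrable μ (logmax_cont (hφc n) (Real.exp_pos _))
  have hInt : ∫ x, Real.log (max (ψ n x) (Real.exp (-(R:ℝ)))) ∂μ
      ≤ 2 * (n:ℝ) * ε + ∫ x, Real.log (max (φ n x) (Real.exp (-(R:ℝ)))) ∂μ := by
    have hint2' : MeasureTheory.Integrable (fun x => 2 * (n:ℝ) * ε
        + Real.log (max (φ n x) (Real.exp (-(R:ℝ))))) μ :=
      (MeasureTheory.integrable_const _).add hint2
    have h : ∫ x, Real.log (max (ψ n x) (Real.exp (-(R:ℝ)))) ∂μ
        ≤ ∫ x, (2 * (n:ℝ) * ε + Real.log (max (φ n x) (Real.exp (-(R:ℝ))))) ∂μ :=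
      MeasureTheory.integral_mono hint1 hint2' hpt
    rwa [MeasureTheory.integral_add (MeasureTheory.integrable_const _) hint2,
      MeasureTheory.integral_const, probReal_univ,
      one_smul] at h
  refine ⟨n - 1, R, ?_⟩
  have hm1 : (n - 1 : ℕ) + 1 = n := by omega
  rw [hm1, Nat.cast_sub h3]
  push_cast
  rw [sub_add_cancel, inv_mul_le_iff₀ hn0]
  calc ∫ x, Real.log (max (ψ n x) (Real.exp (-(R:ℝ)))) ∂μ
      ≤ 2 * (n:ℝ) * ε + ∫ x, Real.log (max (φ n x) (Real.exp (-(R:ℝ)))) ∂μ := hInt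
    _ ≤ 2 * (n:ℝ) * ε + (n:ℝ) * s := by linarith
    _ = (n:ℝ) * (s + 2 * ε) := by ring

end SASP6

/-- `μ ↦ Φ_*(μ)` is upper semi-continuous on the invariant measures
(weak* topology), and is uniformly bounded above by a real constant. -/
theorem stmt6 {X : Type*} [MetricSpace X] [CompactSpace X] [MeasurableSpace X] [BorelSpace X] [Nonempty X]
    (T : X → X) (hT : Continuous T) (φ : ℕ → X → ℝ)
    (hφ : IsAsympSubAdditive T φ) :
    UpperSemicontinuousOn
      (fun μ : MeasureTheory.ProbabilityMeasure X => potStar (μ : MeasureTheory.Measure X) φ)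
      {μ : MeasureTheory.ProbabilityMeasure X |
        (μ : MeasureTheory.Measure X).map T = (μ : MeasureTheory.Measure X)} ∧
    ∃ C : ℝ, ∀ μ : MeasureTheory.Measure X, InvProb T μ → potStar μ φ ≤ (C : EReal) := by
  classical
  obtain ⟨hφpot, happs⟩ := hφ
  have hφc : ∀ k, Continuous (φ k) := fun k => (hφpot k).1
  have hφ0 : ∀ k x, 0 ≤ φ k x := fun k x => (hφpot k).2 x
  constructor
  · choose ψ hψsub happ using fun k : ℕ => happs ((k + 1 : ℝ)⁻¹) (by positivity)
    set G : ℕ × ℕ × ℕ → MeasureTheory.ProbabilityMeasure X → EReal := fun p ν =>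
      (((p.2.1 + 1 : ℝ)⁻¹ * ∫ x, Real.log (max (ψ p.1 (p.2.1 + 1) x) (Real.exp (-(p.2.2 : ℝ))))
        ∂(ν : MeasureTheory.Measure X) + 3 * (p.1 + 1 : ℝ)⁻¹ : ℝ) : EReal) with hG
    have hGcont : ∀ p, Continuous (G p) := by
      intro p
      have hf : Continuous fun x : X =>
          Real.log (max (ψ p.1 (p.2.1 + 1) x) (Real.exp (-(p.2.2 : ℝ)))) :=
        SASP6.logmax_cont ((hψsub p.1).1 (p.2.1 + 1)).1 (Real.exp_pos _)
      have h1 : Continuous fun ν : MeasureTheory.ProbabilityMeasure X =>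
          ∫ x, Real.log (max (ψ p.1 (p.2.1 + 1) x) (Real.exp (-(p.2.2 : ℝ))))
            ∂(ν : MeasureTheory.Measure X) := by
        have h2 := MeasureTheory.ProbabilityMeasure.continuous_integral_boundedContinuousFunction
          (X := X) (BoundedContinuousFunction.mkOfCompact ⟨_, hf⟩)
        simpa only [BoundedContinuousFunction.mkOfCompact_apply, ContinuousMap.coe_mk] using h2
      exact continuous_coe_real_ereal.comp ((continuous_const.mul h1).add continuous_const)
    set F : MeasureTheory.ProbabilityMeasure X → EReal := fun ν => ⨅ p, G p ν with hF
    have hFusc : UpperSemicontinuous F :=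
      SASP6.usc_iInf fun p => (hGcont p).upperSemicontinuous
    have hFle : ∀ ν : MeasureTheory.ProbabilityMeasure X,
        F ν ≤ potStar (ν : MeasureTheory.Measure X) φ := by
      intro ν
      apply SASP6.ereal_le_of_forall_real
      intro s hs
      have hk : ∀ k : ℕ, F ν ≤ ((s + 5 * ((k:ℝ) + 1)⁻¹ : ℝ) : EReal) := by
        intro k
        obtain ⟨m, R, hmR⟩ := SASP6.auxB hφc hφ0 (hψsub k) (by positivity) (happ k)
          (ν : MeasureTheory.Measure X) hs
        refine le_trans (iInf_le _ (k, m, R)) ?_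
        rw [hG]
        exact EReal.coe_le_coe_iff.mpr (by simp only; linarith)
      apply SASP6.ereal_le_of_forall_real
      intro t ht
      rw [EReal.coe_lt_coe_iff] at ht
      obtain ⟨j, hj⟩ := exists_nat_gt (5 / (t - s))
      refine (hk j).trans (EReal.coe_le_coe_iff.mpr ?_)
      have hts : 0 < t - s := by linarith
      have hjpos : (0:ℝ) < (j:ℝ) + 1 := by positivity
      have h5 : (5:ℝ) / (t - s) < (j:ℝ) + 1 := hj.trans (lt_add_one _)
      rw [div_lt_iff₀ hts] at h5
      have h6 : 5 * ((j:ℝ) + 1)⁻¹ < t - s := by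
        rw [show (5:ℝ) * ((j:ℝ) + 1)⁻¹ = 5 / ((j:ℝ) + 1) from by ring, div_lt_iff₀ hjpos]
        nlinarith
      linarith
    have hleF : ∀ ν : MeasureTheory.ProbabilityMeasure X,
        (ν : MeasureTheory.Measure X).map T = (ν : MeasureTheory.Measure X) →
        potStar (ν : MeasureTheory.Measure X) φ ≤ F ν := by
      intro ν hinv
      refine le_iInf fun p => ?_
      exact SASP6.auxA hT hφc hφ0 (hψsub p.1) (by positivity) (happ p.1)
        (ν : MeasureTheory.Measure X) hinv p.2.1 p.2.2
    intro ν hν y hy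
    have h1 : F ν < y := lt_of_le_of_lt (hFle ν) hy
    have h2 := hFusc ν y h1
    filter_upwards [h2.filter_mono nhdsWithin_le_nhds, self_mem_nhdsWithin] with ρ hρ hρs
    exact lt_of_le_of_lt (hleF ρ hρs) hρ
  · obtain ⟨ψ, hψsub, happ⟩ := happs 1 one_pos
    obtain ⟨y0, _, hy0⟩ := isCompact_univ.exists_isMaxOn univ_nonempty
      ((hψsub.1 1).1.continuousOn)
    refine ⟨Real.log (max (ψ 1 y0) 1) + 3, fun μ hμ => ?_⟩
    haveI := hμ.1
    have h1 := SASP6.auxA hT hφc hφ0 hψsub one_pos happ μ hμ.2 0 0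
    refine h1.trans (EReal.coe_le_coe_iff.mpr ?_)
    have hptb : ∀ x : X, Real.log (max (ψ (0 + 1) x) (Real.exp (-((0:ℕ) : ℝ))))
        ≤ Real.log (max (ψ 1 y0) 1) := by
      intro x
      apply Real.log_le_log (lt_max_of_lt_right (Real.exp_pos _))
      simp only [Nat.cast_zero, neg_zero, Real.exp_zero]
      exact max_le_max (isMaxOn_iff.mp hy0 x (mem_univ x)) le_rfl
    have hc : ∫ x, Real.log (max (ψ (0 + 1) x) (Real.exp (-((0:ℕ) : ℝ)))) ∂μ
        ≤ Real.log (max (ψ 1 y0) 1) := by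
      have h := MeasureTheory.integral_mono
        (SASP6.cont_integrable μ (SASP6.logmax_cont (hψsub.1 (0 + 1)).1 (Real.exp_pos _)))
        (MeasureTheory.integrable_const _) hptb
      simpa [MeasureTheory.measure_univ] using h
    simp only [Nat.cast_zero, zero_add, inv_one, one_mul, mul_one, neg_zero,
      Real.exp_zero] at hc ⊢
    linarith [hc]
end

section
/- Let Φ = {log φ_n} be an asymptotically sub-additive potential on a TDS (X,T). Suppose (ν_n) is a sequence of Borel probability measures on X and μ_n := (1/n) Σ_{i=0}^{n-1} ν_n ∘ T^{-i}. If μ_{n_i} converges weakly* to μ for some subsequence (n_i), then μ is T-invariant and limsup_{i→∞} (1/n_i) ∫ log φ_{n_i} dν_{n_i} ≤ Φ_*(μ). -/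
open MeasureTheory Filter Topology Set
open scoped ENNReal NNReal

section MyAux


/-- reindexing: phases -/
lemma my_reindex (m n : ℕ) (hm : 1 ≤ m) (hmn : m ≤ n) (b : ℕ → ℝ) :
    ∑ l ∈ Finset.range m, ∑ j ∈ Finset.range ((n - l)/m), b (l + j*m)
      = ∑ i ∈ Finset.range (n - m + 1), b i := by
  rw [Finset.sum_sigma']
  refine Finset.sum_nbij' (fun p => p.1 + p.2 * m) (fun i => ⟨i % m, i / m⟩) ?_ ?_ ?_ ?_ ?_
  · rintro ⟨l, j⟩ hp
    simp only [Finset.mem_sigma, Finset.mem_range] at hp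
    obtain ⟨hl, hj⟩ := hp
    have hj' : (j+1) * m ≤ n - l := (Nat.le_div_iff_mul_le hm).mp hj
    simp only [Finset.mem_range]
    have : (j+1)*m = j*m + m := by ring
    omega
  · intro i hi
    simp only [Finset.mem_range] at hi
    simp only [Finset.mem_sigma, Finset.mem_range]
    refine ⟨Nat.mod_lt _ hm, ?_⟩
    have h1 : i / m + 1 ≤ (n - i % m) / m := by
      rw [Nat.le_div_iff_mul_le hm]
      have key : i % m + m * (i / m) = i := Nat.mod_add_div i m
      have h2 : (i/m + 1) * m = m * (i/m) + m := by ring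
      rw [h2]
      omega
    omega
  · rintro ⟨l, j⟩ hp
    simp only [Finset.mem_sigma, Finset.mem_range] at hp
    have h1 : (l + j * m) % m = l := by
      rw [Nat.add_mul_mod_self_right, Nat.mod_eq_of_lt hp.1]
    have h2 : (l + j * m) / m = j := by
      rw [Nat.add_mul_div_right _ _ hm, Nat.div_eq_of_lt hp.1]; omega
    simp [h1, h2]
  · intro i hi
    simp [Nat.mod_add_div']
  · intro p hp
    rfl

lemma my_telescope {X : Type*} (T : X → X) (g : ℕ → X → ℝ)
    (hsub : ∀ a b x, g (a+b) x ≤ g a x + g b (T^[a] x)) (m : ℕ) :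
    ∀ (k l : ℕ) (x : X), g (l + k*m) x ≤ g l x + ∑ j ∈ Finset.range k, g m (T^[l + j*m] x) := by
  intro k
  induction k with
  | zero => intro l x; simp
  | succ k ih =>
    intro l x
    have h1 : l + (k+1)*m = (l + k*m) + m := by ring
    rw [h1]
    calc g ((l + k*m) + m) x ≤ g (l + k*m) x + g m (T^[l + k*m] x) := hsub _ _ _
      _ ≤ (g l x + ∑ j ∈ Finset.range k, g m (T^[l + j*m] x)) + g m (T^[l + k*m] x) := by
          linarith [ih l x]
      _ = g l x + ∑ j ∈ Finset.range (k+1), g m (T^[l + j*m] x) := by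
          rw [Finset.sum_range_succ]; ring

lemma my_block {X : Type*} (T : X → X) (g : ℕ → X → ℝ)
    (hsub : ∀ a b x, g (a+b) x ≤ g a x + g b (T^[a] x))
    (m : ℕ) (hm : 1 ≤ m) (C : ℝ) (hC0 : 0 ≤ C) (hC : ∀ j ≤ m, ∀ x, |g j x| ≤ C)
    (n : ℕ) (hn : m ≤ n) (x : X) :
    (m:ℝ) * g n x ≤ (∑ i ∈ Finset.range n, g m (T^[i] x)) + 3*m*C := by
  have key : ∀ l < m, g n x ≤ (∑ j ∈ Finset.range ((n-l)/m), g m (T^[l + j*m] x)) + 2*C := by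
    intro l hl
    have hdm : m * ((n-l)/m) + (n-l) % m = n - l := Nat.div_add_mod (n - l) m
    have hmod : (n - l) % m < m := Nat.mod_lt _ hm
    have hnl : l ≤ n := le_trans (le_of_lt hl) hn
    set k := (n - l)/m with hk
    set r := (n - l) % m with hr'
    have hsplit : n = (l + k * m) + r := by
      have : m * k = k * m := mul_comm _ _
      omega
    have h2 : g n x ≤ g (l + k*m) x + g r (T^[l + k*m] x) := by
      conv_lhs => rw [hsplit]
      exact hsub _ _ _
    have h3 := my_telescope T g hsub m k l x
    have h4 : |g l x| ≤ C := hC l (le_of_lt hl) x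
    have h5 : |g r (T^[l + k*m] x)| ≤ C := hC r (le_of_lt hmod) _
    have h4' := abs_le.mp h4
    have h5' := abs_le.mp h5
    linarith
  -- sum over l
  have hsum : (m:ℝ) * g n x ≤
      (∑ l ∈ Finset.range m, ∑ j ∈ Finset.range ((n-l)/m), g m (T^[l + j*m] x)) + m * (2*C) := by
    have := Finset.sum_le_sum (fun l hl => key l (Finset.mem_range.mp hl))
    simpa [Finset.sum_add_distrib, mul_comm] using this
  rw [my_reindex m n hm hn (fun i => g m (T^[i] x))] at hsum
  -- compare range (n-m+1) with range n
  have htail : ∑ i ∈ Finset.range (n - m + 1), g m (T^[i] x)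
      ≤ (∑ i ∈ Finset.range n, g m (T^[i] x)) + m * C := by
    have hsplit2 : ∑ i ∈ Finset.range n, g m (T^[i] x)
        = (∑ i ∈ Finset.range (n - m + 1), g m (T^[i] x))
          + ∑ i ∈ Finset.Ico (n - m + 1) n, g m (T^[i] x) := by
      rw [Finset.range_eq_Ico, Finset.range_eq_Ico]
      exact (Finset.sum_Ico_consecutive (fun i => g m (T^[i] x)) (n := n - m + 1) (Nat.zero_le _) (by omega)).symm
    have hlb : ∀ i ∈ Finset.Ico (n - m + 1) n, -C ≤ g m (T^[i] x) := by
      intro i _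
      have := abs_le.mp (hC m le_rfl (T^[i] x))
      linarith [this.1]
    have h6 : ∑ i ∈ Finset.Ico (n - m + 1) n, (-C : ℝ) ≤ ∑ i ∈ Finset.Ico (n - m + 1) n, g m (T^[i] x) :=
      Finset.sum_le_sum hlb
    rw [Finset.sum_const] at h6
    have hcard : (Finset.Ico (n - m + 1) n).card = m - 1 := by
      rw [Nat.card_Ico]; omega
    rw [hcard] at h6
    have hcast : ((m : ℝ) - 1) * C ≤ m * C := by nlinarith
    have hcast2 : ((m - 1 : ℕ) : ℝ) = (m:ℝ) - 1 := by
      have : (1:ℕ) ≤ m := hm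
      push_cast [this]; ring
    rw [nsmul_eq_mul, hcast2] at h6
    linarith
  have hm0 : (0:ℝ) ≤ m := Nat.cast_nonneg m
  calc (m:ℝ) * g n x ≤ (∑ i ∈ Finset.range (n - m + 1), g m (T^[i] x)) + m * (2*C) := hsum
    _ ≤ (∑ i ∈ Finset.range n, g m (T^[i] x)) + m*C + m*(2*C) := by linarith
    _ = (∑ i ∈ Finset.range n, g m (T^[i] x)) + 3*m*C := by ring


lemma my_integrable {X : Type*} [MetricSpace X] [CompactSpace X] [MeasurableSpace X] [BorelSpace X]
    {h : X → ℝ} (hc : Continuous h) (μ : Measure X) [IsFiniteMeasure μ] : Integrable h μ := by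
  exact (BoundedContinuousFunction.mkOfCompact (⟨h, hc⟩ : C(X, ℝ))).integrable μ

lemma my_bound {X : Type*} [MetricSpace X] [CompactSpace X]
    {h : X → ℝ} (hc : Continuous h) : ∃ C : ℝ, 0 ≤ C ∧ ∀ x, |h x| ≤ C := by
  refine ⟨‖BoundedContinuousFunction.mkOfCompact (⟨h, hc⟩ : C(X, ℝ))‖, norm_nonneg _, fun x => ?_⟩
  simpa [Real.norm_eq_abs] using
    (BoundedContinuousFunction.mkOfCompact (⟨h, hc⟩ : C(X, ℝ))).norm_coe_le_norm x

lemma my_ext {X : Type*} [MetricSpace X] [MeasurableSpace X] [BorelSpace X]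
    (μ₁ μ₂ : Measure X) [IsFiniteMeasure μ₁] [IsFiniteMeasure μ₂]
    (h : ∀ f : C(X, ℝ), ∫ x, f x ∂μ₁ = ∫ x, f x ∂μ₂) : μ₁ = μ₂ := by
  apply MeasureTheory.ext_of_forall_lintegral_eq_of_IsFiniteMeasure
  intro f
  have key : ∀ (μ : Measure X), IsFiniteMeasure μ →
      ∫⁻ x, (f x : ℝ≥0∞) ∂μ = ENNReal.ofReal (∫ x, (f x : ℝ) ∂μ) := by
    intro μ hμ
    exact lintegral_coe_eq_integral _ (f.integrable_of_nnreal μ)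
  rw [key μ₁ inferInstance, key μ₂ inferInstance]
  congr 1
  exact h ⟨fun x => (f x : ℝ), NNReal.continuous_coe.comp f.continuous⟩

lemma my_ereal_mul_le {a b : ℝ} (ha : 0 < a) {e : EReal} (h : e ≤ (b : EReal)) :
    (a : EReal) * e ≤ ((a * b : ℝ) : EReal) := by
  induction e using EReal.rec with
  | bot => rw [EReal.coe_mul_bot_of_pos ha]; exact bot_le
  | coe y =>
      rw [← EReal.coe_mul]
      exact_mod_cast mul_le_mul_of_nonneg_left (by exact_mod_cast h) ha.le
  | top => exact absurd h (by simp)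

lemma my_muInt {X : Type*} [MetricSpace X] [CompactSpace X] [MeasurableSpace X] [BorelSpace X]
    (T : X → X) (hT : Continuous T) (ν : Measure X) [IsProbabilityMeasure ν]
    (n : ℕ) {h : X → ℝ} (hc : Continuous h) :
    ∫ x, h x ∂(((n : ℝ≥0∞))⁻¹ • ∑ i ∈ Finset.range n, ν.map (T^[i]))
      = (n : ℝ)⁻¹ * ∑ i ∈ Finset.range n, ∫ x, h (T^[i] x) ∂ν := by
  rw [integral_smul_measure]
  rw [integral_finset_sum_measure (by
    intro i _
    haveI : IsProbabilityMeasure (ν.map (T^[i])) :=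
      Measure.isProbabilityMeasure_map (hT.iterate i).measurable.aemeasurable
    exact my_integrable hc _)]
  rw [show ((n : ℝ≥0∞))⁻¹.toReal = (n:ℝ)⁻¹ by simp [ENNReal.toReal_inv], smul_eq_mul]
  congr 1
  refine Finset.sum_congr rfl (fun i _ => ?_)
  rw [integral_map (hT.iterate i).measurable.aemeasurable hc.aestronglyMeasurable]

end MyAux

/-- if `μ_n = (1/n) ∑_{i<n} ν_n ∘ T^{-i}` and `μ_{n_i} → μ` weakly*,
then `μ` is invariant and `limsup (1/n_i) ∫ log φ_{n_i} dν_{n_i} ≤ Φ_*(μ)`. -/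
theorem stmt8 {X : Type*} [MetricSpace X] [CompactSpace X] [MeasurableSpace X] [BorelSpace X] [Nonempty X]
    (T : X → X) (hT : Continuous T) (φ : ℕ → X → ℝ)
    (hφ : IsAsympSubAdditive T φ)
    (ν : ℕ → MeasureTheory.Measure X) (hν : ∀ n, MeasureTheory.IsProbabilityMeasure (ν n))
    (μseq : ℕ → MeasureTheory.Measure X)
    (hμseq : ∀ n, μseq n = ((n : ℝ≥0∞))⁻¹ •
      ∑ i ∈ Finset.range n, (ν n).map (T^[i]))
    (s : ℕ → ℕ) (hs : StrictMono s)
    (μ : MeasureTheory.Measure X) (hfin : MeasureTheory.IsFiniteMeasure μ)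
    (hconv : ∀ f : C(X, ℝ),
      Tendsto (fun i => ∫ x, f x ∂(μseq (s i))) atTop (𝓝 (∫ x, f x ∂μ))) :
    μ.map T = μ ∧
    limsup (fun i : ℕ => (((s i : ℝ)⁻¹ : ℝ) : EReal) * elogInt (ν (s i)) (φ (s i))) atTop
      ≤ potStar μ φ := by
  haveI := hfin
  have hintf : ∀ (n : ℕ) {h : X → ℝ}, Continuous h →
      ∫ x, h x ∂(μseq n) = (n:ℝ)⁻¹ * ∑ i ∈ Finset.range n, ∫ x, h (T^[i] x) ∂(ν n) := by
    intro n h hc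
    haveI := hν n
    rw [hμseq n]
    exact my_muInt T hT (ν n) n hc
  have hsle : ∀ i : ℕ, i ≤ s i := fun i => hs.le_apply
  have hstend : Tendsto s atTop atTop := hs.tendsto_atTop
  have hinvlim : ∀ f : C(X, ℝ),
      Tendsto (fun i => ∫ x, f (T x) ∂(μseq (s i)) - ∫ x, f x ∂(μseq (s i))) atTop (𝓝 0) := by
    intro f
    obtain ⟨Cf, hCf0, hCf⟩ := my_bound f.continuous
    have habs : ∀ j n : ℕ, |∫ x, f (T^[j] x) ∂(ν n)| ≤ Cf := by
      intro j n
      haveI := hν n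
      have := norm_integral_le_of_norm_le_const (μ := ν n) (f := fun x => f (T^[j] x)) (C := Cf)
        (Filter.Eventually.of_forall (fun x => by simpa [Real.norm_eq_abs] using hCf (T^[j] x)))
      simpa [Real.norm_eq_abs, measure_univ] using this
    have hb : ∀ n : ℕ, 1 ≤ n →
        |∫ x, f (T x) ∂(μseq n) - ∫ x, f x ∂(μseq n)| ≤ 2 * Cf / n := by
      intro n hn
      have h1 : ∫ x, f (T x) ∂(μseq n)
          = (n:ℝ)⁻¹ * ∑ i ∈ Finset.range n, ∫ x, f (T^[i+1] x) ∂(ν n) := by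
        rw [hintf n (show Continuous fun x => f (T x) from f.continuous.comp hT)]
        congr 1
        refine Finset.sum_congr rfl (fun i _ => ?_)
        congr 1
        ext x
        rw [Function.iterate_succ_apply']
      have h2 : ∫ x, f x ∂(μseq n)
          = (n:ℝ)⁻¹ * ∑ i ∈ Finset.range n, ∫ x, f (T^[i] x) ∂(ν n) := hintf n f.continuous
      rw [h1, h2, ← mul_sub]
      have h3 : (∑ i ∈ Finset.range n, ∫ x, f (T^[i+1] x) ∂(ν n))
          - ∑ i ∈ Finset.range n, ∫ x, f (T^[i] x) ∂(ν n)
          = (∫ x, f (T^[n] x) ∂(ν n)) - ∫ x, f (T^[0] x) ∂(ν n) := by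
        rw [← Finset.sum_sub_distrib]
        exact Finset.sum_range_sub (fun j => ∫ x, f (T^[j] x) ∂(ν n)) n
      rw [h3, abs_mul]
      have hn' : (0:ℝ) < n := by exact_mod_cast hn
      have h4 : |(∫ x, f (T^[n] x) ∂(ν n)) - ∫ x, f (T^[0] x) ∂(ν n)| ≤ 2 * Cf := by
        have := habs n n
        have := habs 0 n
        rw [abs_sub_le_iff]
        constructor <;> [skip; skip] <;>
          · have h5 := habs n n
            have h6 := habs 0 n
            have h5' := abs_le.mp h5
            have h6' := abs_le.mp h6
            linarith
      rw [abs_inv, abs_of_nonneg (le_of_lt hn')]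
      rw [div_eq_inv_mul]
      exact mul_le_mul_of_nonneg_left h4 (by positivity)
    have hzero : Tendsto (fun i : ℕ => 2 * Cf / (s i : ℝ)) atTop (𝓝 0) := by
      apply Tendsto.const_div_atTop
      exact tendsto_natCast_atTop_atTop.comp hstend
    apply squeeze_zero_norm' _ hzero
    filter_upwards [eventually_ge_atTop 1] with i hi
    have : 1 ≤ s i := le_trans hi (hsle i)
    simpa [Real.norm_eq_abs] using hb (s i) this
  have hinv : μ.map T = μ := by
    haveI : IsFiniteMeasure (μ.map T) := Measure.isFiniteMeasure_map μ T
    apply my_ext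
    intro f
    rw [integral_map hT.measurable.aemeasurable f.continuous.aestronglyMeasurable]
    have h1 : Tendsto (fun i => ∫ x, f (T x) ∂(μseq (s i))) atTop (𝓝 (∫ x, f (T x) ∂μ)) :=
      hconv (f.comp ⟨T, hT⟩)
    have h2 := hconv f
    have h3 := h1.sub h2
    have h4 := hinvlim f
    have h5 := tendsto_nhds_unique h3 h4
    linarith [h5]
  have hprob : IsProbabilityMeasure μ := by
    constructor
    have hone := hconv 1
    have hev : ∀ᶠ i in atTop, (fun i => ∫ x, (1 : C(X,ℝ)) x ∂(μseq (s i))) i = 1 := by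
      filter_upwards [eventually_ge_atTop 1] with i hi
      have hn : 1 ≤ s i := le_trans hi (hsle i)
      have := hintf (s i) (continuous_const (y := (1:ℝ)))
      simp only [ContinuousMap.one_apply]
      rw [this]
      simp only [integral_const]
      haveI := hν (s i)
      simp only [measure_univ, ENNReal.toReal_one, smul_eq_mul, mul_one, Finset.sum_const,
        Finset.card_range, nsmul_eq_mul, mul_one]
      have hsne : ((s i : ℕ) : ℝ) ≠ 0 := by
        exact_mod_cast Nat.one_le_iff_ne_zero.mp hn
      rw [← mul_assoc, inv_mul_cancel₀ hsne]; simp [Measure.real]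
    have hone' := hone.congr' hev
    have hconst : Tendsto (fun _ : ℕ => (1:ℝ)) atTop (𝓝 1) := tendsto_const_nhds
    have := tendsto_nhds_unique hone' hconst
    have hμ1 : ∫ x, (1 : C(X,ℝ)) x ∂μ = 1 := this
    simp only [ContinuousMap.one_apply, integral_const, smul_eq_mul, mul_one] at hμ1
    exact (ENNReal.toReal_eq_one_iff _).mp hμ1
  refine ⟨hinv, ?_⟩
  -- PART 2
  clear hinvlim
  have hmain : ∀ r : ℝ, potStar μ φ < (r : EReal) →
      limsup (fun i : ℕ => (((s i : ℝ)⁻¹ : ℝ) : EReal) * elogInt (ν (s i)) (φ (s i))) atTop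
        ≤ (r : EReal) := by
    intro r hr
    obtain ⟨r', hr'1, hr'2⟩ := EReal.exists_between_coe_real hr
    have hr'r : r' < r := by exact_mod_cast hr'2
    set δ : ℝ := (r - r') / 4 with hδdef
    have hδpos : 0 < δ := by simp only [hδdef]; linarith
    obtain ⟨ψ, hψsub, hψapp⟩ := hφ.2 (δ/2) (by positivity)
    have happ := hψapp δ (by linarith)
    have hev1 : ∀ᶠ n : ℕ in atTop, (((n : ℝ)⁻¹ : ℝ) : EReal) * elogInt μ (φ n) < (r' : EReal) := by
      refine eventually_lt_of_limsup_lt hr'1 ?_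
      isBoundedDefault
    -- choose m
    obtain ⟨m, hm⟩ := (happ.and (hev1.and (eventually_ge_atTop 1))).exists
    obtain ⟨hmapp, hmlt, hm1⟩ := hm
    have hm0 : (0:ℝ) < m := by exact_mod_cast hm1
    -- choose the truncation level c
    set K : ℝ := (m:ℝ) * r' with hKdef
    obtain ⟨c, hcR⟩ : ∃ R : ℕ,
        (∫ x, Real.log (max (φ m x) (Real.exp (-(R : ℝ)))) ∂μ) < K := by
      have hlt : elogInt μ (φ m) < (K : EReal) := by
        have htop : elogInt μ (φ m)
            ≤ ((∫ x, Real.log (max (φ m x) (Real.exp (-((0:ℕ) : ℝ)))) ∂μ : ℝ) : EReal) :=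
          iInf_le _ 0
        obtain ⟨e, he⟩ : ∃ e, elogInt μ (φ m) = e := ⟨_, rfl⟩
        rw [he] at hmlt htop ⊢
        induction e using EReal.rec with
        | bot => exact EReal.bot_lt_coe K
        | coe y =>
            rw [← EReal.coe_mul] at hmlt
            have h1 : (m:ℝ)⁻¹ * y < r' := by exact_mod_cast hmlt
            have h2 : y < K := by
              rw [hKdef]
              have := mul_lt_mul_of_pos_left h1 hm0
              have h3 : (m:ℝ) * ((m:ℝ)⁻¹ * y) = y := by field_simp
              linarith
            exact_mod_cast h2
        | top => exact absurd htop (by simp)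
      rw [elogInt] at hlt
      obtain ⟨R, hR⟩ := iInf_lt_iff.mp hlt
      exact ⟨R, by exact_mod_cast hR⟩
    -- the truncated sub-additive potential and its log
    set g : ℕ → X → ℝ :=
      fun n x => Real.log (max (ψ n x) (Real.exp (-((n * c : ℕ) : ℝ)))) with hgdef
    have hψc : ∀ n, Continuous (ψ n) := fun n => (hψsub.1 n).1
    have hψ0 : ∀ n x, 0 ≤ ψ n x := fun n x => (hψsub.1 n).2 x
    have hχpos : ∀ n (x : X), 0 < max (ψ n x) (Real.exp (-((n * c : ℕ) : ℝ))) :=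
      fun n x => (Real.exp_pos _).trans_le (le_max_right _ _)
    have hgc : ∀ n, Continuous (g n) := by
      intro n
      exact ((hψc n).max continuous_const).log (fun x => (hχpos n x).ne')
    have hglb : ∀ n (x : X), -(((n * c : ℕ) : ℝ)) ≤ g n x := by
      intro n x
      have := (Real.log_le_log_iff (Real.exp_pos _) (hχpos n x)).mpr (le_max_right _ _)
      rwa [Real.log_exp] at this
    have hgψ : ∀ n (x : X), ψ n x ≠ 0 → Real.log (ψ n x) ≤ g n x := by
      intro n x hne
      have hpos : 0 < ψ n x := lt_of_le_of_ne (hψ0 n x) (Ne.symm hne)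
      exact (Real.log_le_log_iff hpos (hχpos n x)).mpr (le_max_left _ _)
    have hgsub : ∀ a b (x : X), g (a + b) x ≤ g a x + g b (T^[a] x) := by
      intro a b x
      have hmul : max (ψ (a+b) x) (Real.exp (-(((a+b) * c : ℕ) : ℝ)))
          ≤ (max (ψ a x) (Real.exp (-((a * c : ℕ) : ℝ))))
            * (max (ψ b (T^[a] x)) (Real.exp (-((b * c : ℕ) : ℝ)))) := by
        apply max_le
        · calc ψ (a+b) x ≤ ψ a x * ψ b (T^[a] x) := hψsub.2 a b x
            _ ≤ _ := by
              apply mul_le_mul (le_max_left _ _) (le_max_left _ _) (hψ0 _ _)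
              exact le_of_lt (hχpos a x)
        · have : Real.exp (-(((a+b) * c : ℕ) : ℝ))
              = Real.exp (-((a * c : ℕ) : ℝ)) * Real.exp (-((b * c : ℕ) : ℝ)) := by
            rw [← Real.exp_add]
            congr 1
            push_cast
            ring
          rw [this]
          apply mul_le_mul (le_max_right _ _) (le_max_right _ _) (le_of_lt (Real.exp_pos _))
          exact le_of_lt (hχpos a x)
      calc g (a+b) x ≤ Real.log ((max (ψ a x) (Real.exp (-((a * c : ℕ) : ℝ))))
            * (max (ψ b (T^[a] x)) (Real.exp (-((b * c : ℕ) : ℝ))))) := by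
            exact (Real.log_le_log_iff (hχpos _ x) (by positivity)).mpr hmul
        _ = g a x + g b (T^[a] x) := Real.log_mul (hχpos a x).ne' (hχpos b _).ne'
    -- uniform bound for g j, j ≤ m
    have hbnd : ∀ j : ℕ, ∃ C : ℝ, 0 ≤ C ∧ ∀ x, |g j x| ≤ C := fun j => my_bound (hgc j)
    choose Cs hCs0 hCs using hbnd
    set C : ℝ := ∑ j ∈ Finset.range (m+1), Cs j with hCdef
    have hC0 : 0 ≤ C := Finset.sum_nonneg (fun j _ => hCs0 j)
    have hCle : ∀ j ≤ m, ∀ x : X, |g j x| ≤ C := by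
      intro j hj x
      refine le_trans (hCs j x) ?_
      exact Finset.single_le_sum (fun k _ => hCs0 k) (Finset.mem_range.mpr (by omega))
    -- L = ∫ g m dμ and its bound
    set L : ℝ := ∫ x, g m x ∂μ with hLdef
    have hP2 : ∀ x : X, g m x ≤ Real.log (max (φ m x) (Real.exp (-(c : ℝ)))) + m * δ := by
      intro x
      have hRHS0 : -(c:ℝ) ≤ Real.log (max (φ m x) (Real.exp (-(c : ℝ)))) := by
        have hpos : 0 < max (φ m x) (Real.exp (-(c : ℝ))) :=
          lt_of_lt_of_le (Real.exp_pos _) (le_max_right _ _)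
        have h := (Real.log_le_log_iff (Real.exp_pos (-(c:ℝ))) hpos).mpr (le_max_right _ _)
        rwa [Real.log_exp] at h
      by_cases hψsm : ψ m x ≤ Real.exp (-((m * c : ℕ) : ℝ))
      · have : g m x = -((m * c : ℕ) : ℝ) := by
          rw [hgdef]
          simp only [max_eq_right hψsm, Real.log_exp]
        rw [this]
        have h1 : -((m * c : ℕ) : ℝ) ≤ -(c:ℝ) := by
          have hm1' : (1:ℝ) ≤ (m:ℝ) := by exact_mod_cast hm1
          have hc0 : (0:ℝ) ≤ (c:ℝ) := Nat.cast_nonneg c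
          push_cast
          nlinarith
        have h2 : (0:ℝ) ≤ m * δ := by positivity
        linarith
      · push_neg at hψsm
        have hψpos : 0 < ψ m x := (Real.exp_pos _).trans hψsm
        have hgm : g m x = Real.log (ψ m x) := by
          rw [hgdef]
          simp only [max_eq_left (le_of_lt hψsm)]
        have hφne : φ m x ≠ 0 := by
          intro h0
          exact hψpos.ne' ((hmapp x).1.mp h0)
        have habs := (hmapp x).2 hφne
        have hlogle : Real.log (ψ m x) ≤ Real.log (φ m x) + m * δ := by
          have := abs_le.mp habs
          linarith [this.1]
        have hφpos : 0 < φ m x := lt_of_le_of_ne ((hφ.1 m).2 x) (Ne.symm hφne)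
        have hmax : Real.log (φ m x) ≤ Real.log (max (φ m x) (Real.exp (-(c : ℝ)))) :=
          (Real.log_le_log_iff hφpos
            (lt_of_lt_of_le (Real.exp_pos _) (le_max_right _ _))).mpr (le_max_left _ _)
        rw [hgm]
        linarith
    -- bound on (1/m) L
    have hcont3 : Continuous fun x => Real.log (max (φ m x) (Real.exp (-(c : ℝ)))) :=
      ((hφ.1 m).1.max continuous_const).log
        (fun x => (lt_of_lt_of_le (Real.exp_pos _) (le_max_right _ _)).ne')
    have hLbound : L < (m:ℝ) * (r' + δ) := by
      have h2 := integral_mono (my_integrable (hgc m) μ)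
        (my_integrable (hcont3.add continuous_const) μ) hP2
      have h3 : ∫ x, (Real.log (max (φ m x) (Real.exp (-(c : ℝ)))) + (m:ℝ) * δ) ∂μ
          = (∫ x, Real.log (max (φ m x) (Real.exp (-(c : ℝ)))) ∂μ) + (m:ℝ) * δ := by
        rw [integral_add (my_integrable hcont3 μ) (integrable_const _), integral_const]
        simp [measure_univ]
      simp only [Pi.add_apply] at h2
      rw [h3] at h2
      have h4 : L ≤ K + (m:ℝ) * δ := le_trans h2 (by linarith)
      rw [hKdef] at h4
      nlinarith
    -- eventual conditions along the subsequence
    have hcm : Tendsto (fun i => ∫ x, g m x ∂(μseq (s i))) atTop (𝓝 L) :=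
      hconv ⟨g m, hgc m⟩
    have hev2 : ∀ᶠ i in atTop, ∫ x, g m x ∂(μseq (s i)) ≤ L + (m:ℝ) * δ :=
      hcm.eventually_le_const (by nlinarith)
    have hev3 : ∀ᶠ i in atTop, ∀ x : X, (φ (s i) x = 0 ↔ ψ (s i) x = 0) ∧
        (φ (s i) x ≠ 0 → |Real.log (φ (s i) x) - Real.log (ψ (s i) x)| ≤ (s i : ℝ) * δ) :=
      hstend.eventually happ
    have hev4 : ∀ᶠ i in atTop, m ≤ s i := hstend.eventually (eventually_ge_atTop m)
    have hev6 : ∀ᶠ i in atTop, 3 * C ≤ δ * (s i : ℝ) := by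
      have : ∀ᶠ i in atTop, ⌈3 * C / δ⌉₊ ≤ s i := hstend.eventually (eventually_ge_atTop _)
      filter_upwards [this] with i hi
      have h1 : 3 * C / δ ≤ (⌈3 * C / δ⌉₊ : ℝ) := Nat.le_ceil _
      have h2 : ((⌈3 * C / δ⌉₊ : ℕ) : ℝ) ≤ (s i : ℝ) := by exact_mod_cast hi
      have h3 : 3 * C / δ ≤ (s i : ℝ) := le_trans h1 h2
      calc 3 * C = (3 * C / δ) * δ := by field_simp
        _ ≤ (s i : ℝ) * δ := mul_le_mul_of_nonneg_right h3 (le_of_lt hδpos)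
        _ = δ * (s i : ℝ) := mul_comm _ _
    have hevfinal : ∀ᶠ i : ℕ in atTop,
        (((s i : ℝ)⁻¹ : ℝ) : EReal) * elogInt (ν (s i)) (φ (s i)) ≤ (r : EReal) := by
      filter_upwards [hev2, hev3, hev4, hev6] with i h2 h3 h4 h6
      set n : ℕ := s i with hndef
      haveI := hν n
      have hn1 : 1 ≤ n := le_trans hm1 h4
      have hn0 : (0:ℝ) < n := by exact_mod_cast hn1
      have hnm : (m:ℝ) ≤ (n:ℝ) := by exact_mod_cast h4
      -- pointwise comparison at scale n
      have hP1 : ∀ x : X, Real.log (max (φ n x) (Real.exp (-((n * c : ℕ) : ℝ))))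
          ≤ g n x + (n:ℝ) * δ := by
        intro x
        by_cases hc1 : φ n x ≤ Real.exp (-((n * c : ℕ) : ℝ))
        · rw [max_eq_right hc1]
          rw [Real.log_exp]
          have := hglb n x
          have hnd : (0:ℝ) ≤ (n:ℝ) * δ := by positivity
          linarith
        · push_neg at hc1
          rw [max_eq_left (le_of_lt hc1)]
          have hφpos : 0 < φ n x := (Real.exp_pos _).trans hc1
          have hφne : φ n x ≠ 0 := hφpos.ne'
          have hψne : ψ n x ≠ 0 := fun h0 => hφne ((h3 x).1.mpr h0)
          have habs := abs_le.mp ((h3 x).2 hφne)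
          have hlogψ : Real.log (ψ n x) ≤ g n x := hgψ n x hψne
          linarith [habs.2]
      -- step A : bound elogInt by the truncated integral
      have hcont4 : Continuous fun x => Real.log (max (φ n x) (Real.exp (-((n * c : ℕ) : ℝ)))) :=
        ((hφ.1 n).1.max continuous_const).log
          (fun x => (lt_of_lt_of_le (Real.exp_pos _) (le_max_right _ _)).ne')
      have hA : elogInt (ν n) (φ n)
          ≤ (((∫ x, g n x ∂(ν n)) + (n:ℝ) * δ : ℝ) : EReal) := by
        have step1 : elogInt (ν n) (φ n)
            ≤ ((∫ x, Real.log (max (φ n x) (Real.exp (-((n * c : ℕ) : ℝ)))) ∂(ν n) : ℝ) : EReal) :=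
          iInf_le _ (n * c)
        refine le_trans step1 ?_
        rw [EReal.coe_le_coe_iff]
        have h5 := integral_mono (my_integrable hcont4 (ν n))
          (my_integrable ((hgc n).add continuous_const) (ν n)) hP1
        have h6' : ∫ x, (g n x + (n:ℝ) * δ) ∂(ν n)
            = (∫ x, g n x ∂(ν n)) + (n:ℝ) * δ := by
          rw [integral_add (my_integrable (hgc n) (ν n)) (integrable_const _), integral_const]
          simp [measure_univ]
        simp only [Pi.add_apply] at h5
        rw [h6'] at h5
        exact h5
      -- step B : sub-additive block estimate integrated
      have hB : (m:ℝ) * ∫ x, g n x ∂(ν n)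
          ≤ (n:ℝ) * ∫ x, g m x ∂(μseq n) + 3 * m * C := by
        have hpt : ∀ x : X, (m:ℝ) * g n x
            ≤ (∑ j ∈ Finset.range n, g m (T^[j] x)) + 3 * m * C :=
          fun x => my_block T g hgsub m hm1 C hC0 hCle n h4 x
        have hcsum : Continuous fun x => (∑ j ∈ Finset.range n, g m (T^[j] x)) + 3 * (m:ℝ) * C := by
          apply Continuous.add _ continuous_const
          apply continuous_finset_sum
          intro j _
          exact (hgc m).comp (hT.iterate j)
        have h7 := integral_mono (((my_integrable (hgc n) (ν n))).const_mul (m:ℝ))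
          (my_integrable hcsum (ν n)) hpt
        rw [integral_const_mul] at h7
        have h8 : ∫ x, ((∑ j ∈ Finset.range n, g m (T^[j] x)) + 3 * (m:ℝ) * C) ∂(ν n)
            = (∑ j ∈ Finset.range n, ∫ x, g m (T^[j] x) ∂(ν n)) + 3 * (m:ℝ) * C := by
          rw [integral_add _ (integrable_const _)]
          · rw [integral_finset_sum _
              (fun j _ => my_integrable (show Continuous fun x => g m (T^[j] x) from (hgc m).comp (hT.iterate j)) (ν n)), integral_const]
            simp [measure_univ]
          · apply integrable_finset_sum
            intro j _
            exact my_integrable ((hgc m).comp (hT.iterate j)) (ν n)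
        rw [h8] at h7
        have h9 : ∑ j ∈ Finset.range n, ∫ x, g m (T^[j] x) ∂(ν n)
            = (n:ℝ) * ∫ x, g m x ∂(μseq n) := by
          rw [hintf n (hgc m)]
          field_simp
        rw [h9] at h7
        linarith
      -- combine the real estimates
      have hM := h2
      have hfinal : (n:ℝ)⁻¹ * ((∫ x, g n x ∂(ν n)) + (n:ℝ) * δ) ≤ r := by
        set In : ℝ := ∫ x, g n x ∂(ν n) with hIn
        set M : ℝ := ∫ x, g m x ∂(μseq n) with hMdef
        have e1 : (m:ℝ) * In ≤ (n:ℝ) * M + 3 * m * C := hB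
        have e2 : M ≤ L + (m:ℝ) * δ := hM
        have e3 : L < (m:ℝ) * (r' + δ) := hLbound
        have e4 : 3 * C ≤ δ * (n:ℝ) := h6
        have hr4 : r = r' + 4 * δ := by rw [hδdef]; ring
        have hm0' : (0:ℝ) < m := hm0
        have e5 : (m:ℝ) * In ≤ (n:ℝ) * ((m:ℝ) * (r' + δ) + (m:ℝ) * δ) + 3 * m * C := by
          have : (n:ℝ) * M ≤ (n:ℝ) * ((m:ℝ) * (r' + δ) + (m:ℝ) * δ) := by
            apply mul_le_mul_of_nonneg_left _ (le_of_lt hn0)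
            nlinarith
          linarith
        have e6 : (m:ℝ) * In ≤ (m:ℝ) * ((n:ℝ) * (r' + 2*δ)) + 3 * m * C := by
          calc (m:ℝ) * In ≤ (n:ℝ) * ((m:ℝ) * (r' + δ) + (m:ℝ) * δ) + 3 * m * C := e5
            _ = (m:ℝ) * ((n:ℝ) * (r' + 2*δ)) + 3 * m * C := by ring
        have e7 : In ≤ (n:ℝ) * (r' + 2*δ) + 3 * C := by
          have h10 : (m:ℝ) * In ≤ (m:ℝ) * ((n:ℝ) * (r' + 2*δ) + 3 * C) := by
            have : (m:ℝ) * ((n:ℝ) * (r' + 2*δ) + 3 * C)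
                = (m:ℝ) * ((n:ℝ) * (r' + 2*δ)) + 3 * m * C := by ring
            linarith [e6]
          exact le_of_mul_le_mul_left h10 hm0'
        have e8 : In + (n:ℝ) * δ ≤ (n:ℝ) * r := by
          have : In + (n:ℝ) * δ ≤ (n:ℝ) * (r' + 2*δ) + 3*C + (n:ℝ) * δ := by linarith
          calc In + (n:ℝ) * δ ≤ (n:ℝ) * (r' + 2*δ) + δ * (n:ℝ) + (n:ℝ) * δ := by linarith
            _ = (n:ℝ) * (r' + 4*δ) := by ring
            _ = (n:ℝ) * r := by rw [hr4]
        calc (n:ℝ)⁻¹ * (In + (n:ℝ) * δ) ≤ (n:ℝ)⁻¹ * ((n:ℝ) * r) := by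
              apply mul_le_mul_of_nonneg_left e8 (by positivity)
          _ = r := by field_simp
      -- conclude in EReal
      have h11 := my_ereal_mul_le (a := ((n:ℝ))⁻¹)
        (b := (∫ x, g n x ∂(ν n)) + (n:ℝ) * δ) (by positivity) hA
      refine le_trans h11 ?_
      exact_mod_cast hfinal
    exact limsup_le_of_le (by isBoundedDefault) hevfinal
  -- conclude
  by_contra hcon
  rw [not_le] at hcon
  obtain ⟨r, hr1, hr2⟩ := EReal.exists_between_coe_real hcon
  exact absurd (hmain r hr1) (not_le.mpr hr2)
end

section
/- Let (X,T) be a TDS, k ≥ 1, Φ_1, …, Φ_k asymptotically sub-additive potentials, a = (a_1,…,a_k) ∈ ℝ^k, ε > 0, and G(a, n, ε) = {x ∈ X : |(1/ℓ) log φ_{ℓ,i}(x) - a_i| < ε for all 1 ≤ i ≤ k and all ℓ ≥ n}. If G(a,n,ε) ≠ ∅, then for any q = (q_1,…,q_k) with all q_i > 0, h_top(T, G(a,n,ε)) ≤ P_Φ(q) - Σ_{i=1}^k (a_i - ε) q_i, where P_Φ(q) := P(T, Σ_i q_i Φ_i). -/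
open MeasureTheory Filter Topology Set
open scoped ENNReal NNReal

/-- The set `G(a, n, ε)` of points whose Lyapunov averages are `ε`-close to `a`
at all times `ℓ ≥ n`. -/
def lyapG {X : Type*} {k : ℕ} (φ : Fin k → ℕ → X → ℝ) (a : Fin k → ℝ) (n : ℕ) (ε : ℝ) :
    Set X :=
  {x | ∀ i, ∀ ℓ, n ≤ ℓ → 0 < φ i ℓ x ∧ |Real.log (φ i ℓ x) / (ℓ : ℝ) - a i| < ε}


-- ===================== auxiliary lemmas =====================

section Aux

open MeasureTheory Filter Topology Set
open scoped ENNReal NNReal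

lemma sep_card_bound {X : Type*} [MetricSpace X] [CompactSpace X]
    (T : X → X) (ℓ : ℕ) (δ : ℝ) (hδ : 0 < δ) :
    ∃ K : ℕ, ∀ E : Finset X, IsSep T ℓ δ E → E.card ≤ K := by
  have hcp : TotallyBounded (Set.univ : Set (Fin ℓ → X)) := isCompact_univ.totallyBounded
  obtain ⟨t, htf, htc⟩ := Metric.totallyBounded_iff.1 hcp (δ/2) (by positivity)
  refine ⟨htf.toFinset.card, fun E hE => ?_⟩
  have hch : ∀ x : X, ∃ c ∈ t, (fun m : Fin ℓ => T^[(m : ℕ)] x) ∈ Metric.ball c (δ/2) := by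
    intro x
    have := htc (Set.mem_univ (fun m : Fin ℓ => T^[(m : ℕ)] x))
    simpa using this
  choose c hc hcb using hch
  refine Finset.card_le_card_of_injOn c (fun x _ => htf.mem_toFinset.2 (hc x)) ?_
  intro x hx y hy hxy
  by_contra hne
  obtain ⟨m, hm, hd⟩ := hE x (by exact_mod_cast hx) y (by exact_mod_cast hy) hne
  have h1 : dist (fun m : Fin ℓ => T^[(m : ℕ)] x) (fun m : Fin ℓ => T^[(m : ℕ)] y) < δ := by
    have hx' := hcb x
    have hy' := hcb y
    rw [Metric.mem_ball] at hx' hy'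
    calc dist (fun m : Fin ℓ => T^[(m : ℕ)] x) (fun m : Fin ℓ => T^[(m : ℕ)] y)
        ≤ dist (fun m : Fin ℓ => T^[(m : ℕ)] x) (c x)
          + dist (fun m : Fin ℓ => T^[(m : ℕ)] y) (c y) := by
          rw [hxy]; exact dist_triangle_right _ _ _
      _ < δ/2 + δ/2 := add_lt_add hx' hy'
      _ = δ := by ring
  have h2 : dist (T^[m] x) (T^[m] y) ≤
      dist (fun m : Fin ℓ => T^[(m : ℕ)] x) (fun m : Fin ℓ => T^[(m : ℕ)] y) :=
    dist_le_pi_dist (fun m : Fin ℓ => T^[(m : ℕ)] x) (fun m : Fin ℓ => T^[(m : ℕ)] y) ⟨m, hm⟩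
  linarith

lemma max_sep_set {X : Type*} [MetricSpace X] [CompactSpace X]
    (T : X → X) (ℓ : ℕ) (δ : ℝ) (hδ : 0 < δ) (G : Set X) :
    ∃ E : Finset X, ↑E ⊆ G ∧ IsSep T ℓ δ E ∧
      ∀ y ∈ G, ∃ x ∈ E, ∀ m < ℓ, dist (T^[m] x) (T^[m] y) ≤ δ := by
  classical
  obtain ⟨K, hK⟩ := sep_card_bound T ℓ δ hδ
  set S : Set ℕ := {m | ∃ E : Finset X, ↑E ⊆ G ∧ IsSep T ℓ δ E ∧ E.card = m} with hS
  have h0 : (0 : ℕ) ∈ S := ⟨∅, by simp, fun x hx => by simp at hx, rfl⟩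
  have hbdd : BddAbove S := ⟨K, fun m hm => by obtain ⟨E, _, hE, hc⟩ := hm; exact hc ▸ hK E hE⟩
  obtain ⟨E, hEG, hEs, hEc⟩ : sSup S ∈ S := Nat.sSup_mem ⟨0, h0⟩ hbdd
  refine ⟨E, hEG, hEs, fun y hy => ?_⟩
  by_cases hyE : y ∈ E
  · exact ⟨y, hyE, fun m _ => by simp [hδ.le]⟩
  by_cases hsep : IsSep T ℓ δ (insert y E)
  · exfalso
    have hmem : E.card + 1 ∈ S :=
      ⟨insert y E, by rw [Finset.coe_insert]; exact Set.insert_subset hy hEG, hsep,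
        Finset.card_insert_of_notMem hyE⟩
    have := le_csSup hbdd hmem
    omega
  unfold IsSep at hsep
  push_neg at hsep
  obtain ⟨u, hu, v, hv, huv, hnd⟩ := hsep
  rw [Finset.mem_insert] at hu hv
  rcases hu with hu | hu <;> rcases hv with hv | hv
  · exact absurd (hu.trans hv.symm) huv
  · exact ⟨v, hv, fun m hm => by
      have := hnd m hm; rw [hu] at this; rw [dist_comm] at this; exact this⟩
  · exact ⟨u, hu, fun m hm => by have := hnd m hm; rw [hv] at this; exact this⟩
  · exfalso
    obtain ⟨m, hm, hd⟩ := hEs u hu v hv huv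
    exact absurd (hnd m hm) (not_le.2 hd)

lemma term_le_of_ge {S : ℝ≥0∞} {ℓ : ℕ} (hℓ : 1 ≤ ℓ) {b : ℝ}
    (h : ENNReal.ofReal (Real.exp ((ℓ : ℝ) * b)) ≤ S) :
    ((b : ℝ) : EReal) ≤ (((ℓ : ℝ)⁻¹ : ℝ) : EReal) * elogENN S := by
  have hℓR : (0 : ℝ) < ℓ := by exact_mod_cast hℓ
  have hS0 : S ≠ 0 := by
    intro h0
    rw [h0, nonpos_iff_eq_zero, ENNReal.ofReal_eq_zero] at h
    exact absurd h (not_le.2 (Real.exp_pos _))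
  by_cases hStop : S = ⊤
  · rw [elogENN, if_neg hS0, if_pos hStop, EReal.coe_mul_top_of_pos (by positivity)]
    exact le_top
  · rw [elogENN, if_neg hS0, if_neg hStop, ← EReal.coe_mul, EReal.coe_le_coe_iff]
    have h1 : Real.exp ((ℓ : ℝ) * b) ≤ S.toReal := by
      have := ENNReal.toReal_mono hStop h
      rwa [ENNReal.toReal_ofReal (Real.exp_nonneg _)] at this
    have h2 : (ℓ : ℝ) * b ≤ Real.log S.toReal := by
      have := Real.log_le_log (Real.exp_pos _) h1
      rwa [Real.log_exp] at this
    calc b = (ℓ : ℝ)⁻¹ * ((ℓ : ℝ) * b) := by field_simp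
      _ ≤ (ℓ : ℝ)⁻¹ * Real.log S.toReal := mul_le_mul_of_nonneg_left h2 (by positivity)

lemma le_of_term_lt {S : ℝ≥0∞} {ℓ : ℕ} (hℓ : 1 ≤ ℓ) {b : ℝ}
    (h : (((ℓ : ℝ)⁻¹ : ℝ) : EReal) * elogENN S < (b : EReal)) :
    S ≤ ENNReal.ofReal (Real.exp ((ℓ : ℝ) * b)) := by
  have hℓR : (0 : ℝ) < ℓ := by exact_mod_cast hℓ
  by_cases hS0 : S = 0
  · simp [hS0]
  by_cases hStop : S = ⊤
  · rw [elogENN, if_neg hS0, if_pos hStop, EReal.coe_mul_top_of_pos (by positivity)] at h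
    exact absurd h (by simp)
  rw [elogENN, if_neg hS0, if_neg hStop, ← EReal.coe_mul, EReal.coe_lt_coe_iff] at h
  have h2 : Real.log S.toReal < (ℓ : ℝ) * b := by
    have := mul_lt_mul_of_pos_left h hℓR
    calc Real.log S.toReal = (ℓ : ℝ) * ((ℓ : ℝ)⁻¹ * Real.log S.toReal) := by field_simp
      _ < (ℓ : ℝ) * b := this
  have h3 : S.toReal ≤ Real.exp ((ℓ : ℝ) * b) := by
    have hpos : 0 < S.toReal := ENNReal.toReal_pos hS0 hStop
    rw [← Real.exp_log hpos]
    exact Real.exp_le_exp.2 h2.le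
  calc S = ENNReal.ofReal S.toReal := (ENNReal.ofReal_toReal hStop).symm
    _ ≤ _ := ENNReal.ofReal_le_ofReal h3

lemma weighted_lower {X : Type*} [MetricSpace X] {k : ℕ} (φ : Fin k → ℕ → X → ℝ)
    (a : Fin k → ℝ) (ε : ℝ) (n : ℕ) (hn : 0 < n) (q : Fin k → ℝ) (hq : ∀ i, 0 < q i)
    {x : X} (hx : x ∈ lyapG φ a n ε) {ℓ : ℕ} (hℓ : n ≤ ℓ) :
    Real.exp ((ℓ : ℝ) * ∑ i, (a i - ε) * q i) ≤ weightedPot φ q ℓ x := by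
  have hℓ0 : 0 < ℓ := lt_of_lt_of_le hn hℓ
  have hℓR : (0 : ℝ) < ℓ := by exact_mod_cast hℓ0
  have hpos : ∀ i, 0 < φ i ℓ x := fun i => (hx i ℓ hℓ).1
  have hlog : ∀ i, (ℓ : ℝ) * (a i - ε) ≤ Real.log (φ i ℓ x) := by
    intro i
    have h := (hx i ℓ hℓ).2
    rw [abs_lt] at h
    have h1 : a i - ε < Real.log (φ i ℓ x) / ℓ := by linarith [h.1]
    have h2 := (lt_div_iff₀ hℓR).1 h1
    linarith
  unfold weightedPot
  have hrw : ∀ i : Fin k, i ∈ Finset.univ →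
      φ i ℓ x ^ (q i) = Real.exp (Real.log (φ i ℓ x) * q i) :=
    fun i _ => Real.rpow_def_of_pos (hpos i) (q i)
  rw [Finset.prod_congr rfl hrw, ← Real.exp_sum]
  apply Real.exp_le_exp.2
  rw [Finset.mul_sum]
  apply Finset.sum_le_sum
  intro i _
  calc (ℓ : ℝ) * ((a i - ε) * q i) = ((ℓ : ℝ) * (a i - ε)) * q i := by ring
    _ ≤ Real.log (φ i ℓ x) * q i := mul_le_mul_of_nonneg_right (hlog i) (hq i).le

lemma aux_pressure_ge {X : Type*} [MetricSpace X] [CompactSpace X] {k : ℕ}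
    (T : X → X) (φ : Fin k → ℕ → X → ℝ) (a : Fin k → ℝ) {ε : ℝ} {n : ℕ} (hn : 0 < n)
    (hne : (lyapG φ a n ε).Nonempty) (q : Fin k → ℝ) (hq : ∀ i, 0 < q i) :
    ((∑ i, (a i - ε) * q i : ℝ) : EReal) ≤ pressure T (weightedPot φ q) := by
  obtain ⟨x₀, hx₀⟩ := hne
  have hstep : ∀ ℓ : ℕ, n ≤ ℓ →
      ((∑ i, (a i - ε) * q i : ℝ) : EReal) ≤
        (((ℓ : ℝ)⁻¹ : ℝ) : EReal) * elogENN (sepSum T (weightedPot φ q) ℓ 1) := by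
    intro ℓ hℓ
    apply term_le_of_ge (le_trans hn hℓ)
    have hsep : IsSep T ℓ 1 ({x₀} : Finset X) := by
      intro x hx y hy hxy
      simp only [Finset.mem_singleton] at hx hy
      exact absurd (hx.trans hy.symm) hxy
    have hle : ∑ x ∈ ({x₀} : Finset X), ENNReal.ofReal (weightedPot φ q ℓ x)
        ≤ sepSum T (weightedPot φ q) ℓ 1 := le_iSup₂_of_le _ hsep le_rfl
    refine le_trans ?_ hle
    rw [Finset.sum_singleton]
    exact ENNReal.ofReal_le_ofReal (weighted_lower φ a ε n hn q hq hx₀ hℓ)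
  have hlimsup : ((∑ i, (a i - ε) * q i : ℝ) : EReal) ≤
      limsup (fun ℓ : ℕ => (((ℓ : ℝ)⁻¹ : ℝ) : EReal) *
        elogENN (sepSum T (weightedPot φ q) ℓ 1)) atTop :=
    le_limsup_of_frequently_le ((eventually_atTop.2 ⟨n, hstep⟩).frequently)
  refine hlimsup.trans ?_
  rw [pressure]
  exact le_iSup₂_of_le 1 one_pos le_rfl

end Aux

/-- Lemma 4.3(i): entropy bound `h_top(T, G(a,n,ε)) ≤ P_Φ(q) - ∑ (a_i - ε) q_i`
for positive `q`. -/
theorem stmt13 {X : Type*} [MetricSpace X] [CompactSpace X] [MeasurableSpace X] [BorelSpace X] [Nonempty X] {k : ℕ}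
    (T : X → X) (hT : Continuous T) (φ : Fin k → ℕ → X → ℝ)
    (hφ : ∀ i, IsAsympSubAdditive T (φ i))
    (a : Fin k → ℝ) (ε : ℝ) (hε : 0 < ε) (n : ℕ) (hn : 0 < n)
    (hne : (lyapG φ a n ε).Nonempty)
    (q : Fin k → ℝ) (hq : ∀ i, 0 < q i) :
    entOf T (lyapG φ a n ε) ≤
      pressure T (weightedPot φ q) - (((∑ i, (a i - ε) * q i) : ℝ) : EReal) := by
  classical
  obtain ⟨x₀, hx₀⟩ := hne
  set c : ℝ := ∑ i, (a i - ε) * q i with hcdef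
  have hpc : (c : EReal) ≤ pressure T (weightedPot φ q) :=
    aux_pressure_ge T φ a hn ⟨x₀, hx₀⟩ q hq
  rw [entOf]
  refine iSup₂_le fun ε' hε' => ?_
  refine le_of_forall_gt_imp_ge_of_dense fun d hd => ?_
  obtain ⟨s, hs1, hs2⟩ := EReal.lt_iff_exists_real_btwn.1 hd
  refine le_trans ?_ hs2.le
  have hsub : pressure T (weightedPot φ q) < (s : EReal) + (c : EReal) :=
    (EReal.sub_lt_iff (Or.inl (by simp)) (Or.inl (by simp))).1 hs1
  have hPne_top : pressure T (weightedPot φ q) ≠ ⊤ := by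
    intro h; rw [h] at hsub
    rw [← EReal.coe_add] at hsub
    exact absurd hsub (by simp)
  have hPne_bot : pressure T (weightedPot φ q) ≠ ⊥ := by
    intro h; rw [h] at hpc; exact absurd hpc (by simp)
  set P : ℝ := (pressure T (weightedPot φ q)).toReal with hPdef
  have hPeq : ((P : ℝ) : EReal) = pressure T (weightedPot φ q) :=
    EReal.coe_toReal hPne_top hPne_bot
  have hP1 : P < s + c := by
    rw [← hPeq, ← EReal.coe_add, EReal.coe_lt_coe_iff] at hsub; exact hsub
  have hP2 : c ≤ P := by rw [← hPeq, EReal.coe_le_coe_iff] at hpc; exact hpc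
  have hs0 : 0 < s := by linarith
  set η : ℝ := (s + c - P) / 2 with hηdef
  have hη : 0 < η := by rw [hηdef]; linarith
  rw [entAt]
  apply sInf_le
  refine ⟨s, rfl, ?_⟩
  rw [ENNReal.iSup_eq_zero]
  intro N
  -- geometric constant
  set r : ℝ≥0∞ := ENNReal.ofReal (Real.exp (-s)) with hrdef
  have hr1 : r < 1 := by
    rw [hrdef, ENNReal.ofReal_lt_one]; exact Real.exp_lt_one_iff.2 (by linarith)
  set C : ℝ≥0∞ := r * (1 - r)⁻¹ with hCdef
  have hC : C ≠ ⊤ := by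
    apply ENNReal.mul_ne_top (by simp [hrdef])
    rw [ENNReal.inv_ne_top]
    exact fun h => absurd (tsub_eq_zero_iff_le.1 h) (not_le.2 hr1)
  set δ : ℝ := ε' / 2 with hδdef
  have hδ0 : 0 < δ := half_pos hε'
  -- eventual upper bound on sepSum
  have hlimle : limsup (fun ℓ : ℕ => (((ℓ : ℝ)⁻¹ : ℝ) : EReal) *
      elogENN (sepSum T (weightedPot φ q) ℓ δ)) atTop ≤ pressure T (weightedPot φ q) := by
    rw [pressure]; exact le_iSup₂_of_le δ hδ0 le_rfl
  have hlimlt : limsup (fun ℓ : ℕ => (((ℓ : ℝ)⁻¹ : ℝ) : EReal) *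
      elogENN (sepSum T (weightedPot φ q) ℓ δ)) atTop < ((P + η : ℝ) : EReal) :=
    lt_of_le_of_lt hlimle (by rw [← hPeq, EReal.coe_lt_coe_iff]; linarith)
  have hev := eventually_lt_of_limsup_lt hlimlt
  have hev2 : ∀ᶠ ℓ : ℕ in atTop, sepSum T (weightedPot φ q) ℓ δ ≤
      ENNReal.ofReal (Real.exp ((ℓ : ℝ) * (P + η))) := by
    filter_upwards [hev, eventually_ge_atTop 1] with ℓ h1 h2
    exact le_of_term_lt h2 h1
  -- the main eventual bound on bowenM
  have hkey : ∀ᶠ ℓ : ℕ in atTop, bowenM T (lyapG φ a n ε) s N ε' ≤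
      ENNReal.ofReal (Real.exp (-((ℓ : ℝ) * η)))
        + ENNReal.ofReal (Real.exp (-(s * (ℓ : ℝ)))) * C := by
    filter_upwards [hev2, eventually_ge_atTop N, eventually_ge_atTop n,
      eventually_ge_atTop 1] with ℓ hS hNℓ hnℓ h1ℓ
    obtain ⟨E, hEG, hEs, hEcov⟩ := max_sep_set T ℓ δ hδ0 (lyapG φ a n ε)
    set v : ℝ≥0∞ := ENNReal.ofReal (Real.exp (-(s * (ℓ : ℝ)))) with hvdef
    -- cardinality bound
    have hcard_sum : (E.card : ℝ≥0∞) * ENNReal.ofReal (Real.exp ((ℓ : ℝ) * c)) ≤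
        sepSum T (weightedPot φ q) ℓ δ := by
      calc (E.card : ℝ≥0∞) * ENNReal.ofReal (Real.exp ((ℓ : ℝ) * c))
          = ∑ _x ∈ E, ENNReal.ofReal (Real.exp ((ℓ : ℝ) * c)) := by
            rw [Finset.sum_const, nsmul_eq_mul]
        _ ≤ ∑ x ∈ E, ENNReal.ofReal (weightedPot φ q ℓ x) :=
            Finset.sum_le_sum fun x hx => ENNReal.ofReal_le_ofReal
              (weighted_lower φ a ε n hn q hq (hEG (Finset.mem_coe.2 hx)) hnℓ)
        _ ≤ sepSum T (weightedPot φ q) ℓ δ := le_iSup₂_of_le E hEs le_rfl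
    have hcard : (E.card : ℝ) * Real.exp ((ℓ : ℝ) * c) ≤ Real.exp ((ℓ : ℝ) * (P + η)) := by
      have h := hcard_sum.trans hS
      rw [← ENNReal.ofReal_natCast, ← ENNReal.ofReal_mul (by positivity)] at h
      exact (ENNReal.ofReal_le_ofReal_iff (Real.exp_nonneg _)).1 h
    have hcard' : (E.card : ℝ) ≤ Real.exp ((ℓ : ℝ) * (P + η)) * Real.exp (-((ℓ : ℝ) * c)) := by
      rw [Real.exp_neg, ← div_eq_mul_inv, le_div_iff₀ (Real.exp_pos _)]
      exact hcard
    have hkeyexp : (ℓ : ℝ) * (P + η) + (-((ℓ : ℝ) * c)) + (-(s * (ℓ : ℝ))) = -((ℓ : ℝ) * η) := by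
      have hpe : P + η - c - s = -η := by rw [hηdef]; ring
      calc (ℓ : ℝ) * (P + η) + (-((ℓ : ℝ) * c)) + (-(s * (ℓ : ℝ)))
          = (ℓ : ℝ) * (P + η - c - s) := by ring
        _ = (ℓ : ℝ) * (-η) := by rw [hpe]
        _ = -((ℓ : ℝ) * η) := by ring
    have hcard2 : (E.card : ℝ) * Real.exp (-(s * (ℓ : ℝ))) ≤ Real.exp (-((ℓ : ℝ) * η)) := by
      calc (E.card : ℝ) * Real.exp (-(s * (ℓ : ℝ)))
          ≤ (Real.exp ((ℓ : ℝ) * (P + η)) * Real.exp (-((ℓ : ℝ) * c)))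
            * Real.exp (-(s * (ℓ : ℝ))) :=
            mul_le_mul_of_nonneg_right hcard' (Real.exp_nonneg _)
        _ = Real.exp ((ℓ : ℝ) * (P + η) + (-((ℓ : ℝ) * c)) + (-(s * (ℓ : ℝ)))) := by
            rw [Real.exp_add, Real.exp_add]
        _ = Real.exp (-((ℓ : ℝ) * η)) := by rw [hkeyexp]
    -- the covering family
    set L : List X := E.toList with hLdef
    set f : ℕ → X × ℕ :=
      fun j => if h : j < L.length then (L.get ⟨j, h⟩, ℓ) else (x₀, ℓ + j + 1) with hfdef
    have hfN : ∀ j, N ≤ (f j).2 := by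
      intro j
      by_cases h : j < L.length <;> simp only [hfdef, h, dif_pos, dif_neg, not_false_iff] <;>
        omega
    have hfcov : lyapG φ a n ε ⊆ ⋃ j, dynBall T (f j).1 (f j).2 ε' := by
      intro y hy
      obtain ⟨x, hxE, hxd⟩ := hEcov y hy
      obtain ⟨jf, hjf⟩ := List.mem_iff_get.1 (Finset.mem_toList.2 hxE)
      refine Set.mem_iUnion.2 ⟨jf.1, ?_⟩
      have hfj : f jf.1 = (L.get jf, ℓ) := by
        rw [hfdef]; exact dif_pos jf.2
      rw [hfj, hjf]
      intro m hm
      exact lt_of_le_of_lt (hxd m hm) (by rw [hδdef]; linarith)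
    have hb1 : bowenM T (lyapG φ a n ε) s N ε' ≤
        ∑' j, ENNReal.ofReal (Real.exp (-(s * (((f j).2 : ℕ) : ℝ)))) := by
      rw [bowenM]
      exact iInf_le_of_le f (iInf_le_of_le hfN (iInf_le_of_le hfcov le_rfl))
    have hterm : ∀ j : ℕ, ENNReal.ofReal (Real.exp (-(s * (((f j).2 : ℕ) : ℝ)))) ≤
        (if j < L.length then v else 0) + v * r ^ (j + 1) := by
      intro j
      by_cases h : j < L.length
      · have : (f j).2 = ℓ := by rw [hfdef]; simp only [h, dif_pos]
        rw [this, if_pos h, hvdef]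
        exact le_add_of_le_of_nonneg le_rfl (by simp)
      · have h2 : (f j).2 = ℓ + j + 1 := by rw [hfdef]; simp only [h, dif_neg, not_false_iff]
        rw [h2, if_neg h, zero_add]
        have hre : Real.exp (-(s * ((ℓ + j + 1 : ℕ) : ℝ)))
            = Real.exp (-(s * (ℓ : ℝ))) * Real.exp (-s) ^ (j + 1) := by
          have harg : -(s * ((ℓ + j + 1 : ℕ) : ℝ)) = -(s * (ℓ : ℝ)) + ((j + 1 : ℕ) : ℝ) * (-s) := by
            push_cast; ring
          rw [harg, Real.exp_add, Real.exp_nat_mul]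
        rw [hre, ENNReal.ofReal_mul (Real.exp_nonneg _),
          ENNReal.ofReal_pow (Real.exp_nonneg _), hvdef, hrdef]
    refine hb1.trans ?_
    refine (ENNReal.tsum_le_tsum hterm).trans ?_
    rw [ENNReal.tsum_add]
    have hA : ∑' j : ℕ, (if j < L.length then v else 0) = (E.card : ℝ≥0∞) * v := by
      rw [tsum_eq_sum (s := Finset.range L.length)
        (by intro b hb; rw [if_neg]; simpa using hb)]
      rw [Finset.sum_congr rfl (fun b hb => if_pos (Finset.mem_range.1 hb)),
        Finset.sum_const, Finset.card_range, nsmul_eq_mul]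
      congr 1
      rw [hLdef, Finset.length_toList]
    have hB : ∑' j : ℕ, v * r ^ (j + 1) = v * C := by
      have hstep : ∀ j : ℕ, v * r ^ (j + 1) = (v * r) * r ^ j := by
        intro j; rw [pow_succ]; ring
      rw [tsum_congr hstep, ENNReal.tsum_mul_left, ENNReal.tsum_geometric, hCdef]
      ring
    rw [hA, hB]
    apply add_le_add_left
    rw [hvdef, ← ENNReal.ofReal_natCast, ← ENNReal.ofReal_mul (by positivity)]
    exact ENNReal.ofReal_le_ofReal hcard2
  have tA : Tendsto (fun ℓ : ℕ => (ℓ : ℝ) * η) atTop atTop :=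
    Tendsto.atTop_mul_const hη tendsto_natCast_atTop_atTop
  have tB : Tendsto (fun ℓ : ℕ => (ℓ : ℝ) * s) atTop atTop :=
    Tendsto.atTop_mul_const hs0 tendsto_natCast_atTop_atTop
  have t1 : Tendsto (fun ℓ : ℕ => Real.exp (-((ℓ : ℝ) * η))) atTop (𝓝 0) :=
    Real.tendsto_exp_atBot.comp (tendsto_neg_atTop_atBot.comp tA)
  have t2 : Tendsto (fun ℓ : ℕ => Real.exp (-(s * (ℓ : ℝ)))) atTop (𝓝 0) := by
    have h := Real.tendsto_exp_atBot.comp (tendsto_neg_atTop_atBot.comp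
      (Tendsto.const_mul_atTop hs0 tendsto_natCast_atTop_atTop))
    simpa [Function.comp_def] using h
  have T1 : Tendsto (fun ℓ : ℕ => ENNReal.ofReal (Real.exp (-((ℓ : ℝ) * η)))) atTop (𝓝 0) := by
    simpa using ENNReal.tendsto_ofReal t1
  have T2 : Tendsto (fun ℓ : ℕ => ENNReal.ofReal (Real.exp (-(s * (ℓ : ℝ)))) * C)
      atTop (𝓝 0) := by
    have h := ENNReal.Tendsto.mul_const (ENNReal.tendsto_ofReal t2) (Or.inr hC)
    simpa using h
  have htend : Tendsto (fun ℓ : ℕ => ENNReal.ofReal (Real.exp (-((ℓ : ℝ) * η)))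
      + ENNReal.ofReal (Real.exp (-(s * (ℓ : ℝ)))) * C) atTop (𝓝 0) := by
    simpa using T1.add T2
  exact le_zero_iff.1 (ge_of_tendsto htend hkey)
end
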